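/- arXiv:2010.03208 — 8 statements merged into one kernel-verified Lean document; each statement's English description precedes it below -/
import Mathlib

section
/- Let G = A × F be a topological direct product, where A is an abelian topological group and F is a finite (discrete) group. If A is minimal, then G is c-minimal. -/
open Filter Topology Pointwise
open scoped Manifold

universe u

/-- A topological group `(G, t)` is *minimal* if every Hausdorff group topology on `G`
coarser than `t` coincides with `t`.  (Recall that in Mathlib `t ≤ t'` means that `t'` is
coarser than `t`, i.e. every `t'`-open set is `t`-open.) -/
def IsMinimalGroup (G : Type u) [Group G] [t : TopologicalSpace G] : Prop :=
  ∀ t' : TopologicalSpace G, t ≤ t' → @IsTopologicalGroup G t' _ → @T2Space G t' → t' = t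

/-- A topological group is *c-minimal* if every closed subgroup (with the subspace
topology) is minimal. -/
def IsCMinimalGroup (G : Type u) [Group G] [TopologicalSpace G] : Prop :=
  ∀ H : Subgroup G, IsClosed (H : Set G) → IsMinimalGroup H

lemma aux_mem_closure_of_mul {G : Type*} [Group G] [TopologicalSpace G] [IsTopologicalGroup G]
    {s : Set G} {a : G} (h : ∀ U ∈ 𝓝 (1 : G), a ∈ U * s) : a ∈ closure s := by
  rw [mem_closure_iff_nhds]
  intro O hO
  set e : G ≃ₜ G := (Homeomorph.inv G).trans (Homeomorph.mulLeft a)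
  have hU : e '' O ∈ 𝓝 (1 : G) := by
    have he : e a = 1 := by simp [e]
    rw [← he]
    exact e.isOpenMap.image_mem_nhds hO
  obtain ⟨u, hu, x, hx, hax⟩ := h _ hU
  obtain ⟨o, ho, rfl⟩ := hu
  have hox : o = x := by
    have h1 : a * o⁻¹ * x = a := hax
    have h2 : o⁻¹ * x = 1 := by
      have := (mul_assoc a o⁻¹ x) ▸ h1.trans (mul_one a).symm
      exact mul_left_cancel this
    exact (inv_mul_eq_one.mp h2)
  exact ⟨o, ho, hox ▸ hx⟩

lemma aux_closure_subset_mul {G : Type*} [Group G] [TopologicalSpace G] [IsTopologicalGroup G]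
    {W : Set G} (hW : W ∈ 𝓝 (1 : G)) (s : Set G) : closure s ⊆ W * s := by
  intro z hz
  set e : G ≃ₜ G := (Homeomorph.inv G).trans (Homeomorph.mulRight z)
  have hO : e '' W ∈ 𝓝 z := by
    have he : e 1 = z := by simp [e]
    rw [← he]
    exact e.isOpenMap.image_mem_nhds hW
  obtain ⟨x, hxO, hxs⟩ := mem_closure_iff_nhds.1 hz _ hO
  obtain ⟨w, hw, rfl⟩ := hxO
  exact ⟨w, hw, w⁻¹ * z, hxs, by group⟩

lemma aux_eq_one {G : Type*} [Group G] [TopologicalSpace G] [IsTopologicalGroup G] [T2Space G]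
    {z : G} (h : ∀ V ∈ 𝓝 (1 : G), z ∈ closure V) : z = 1 := by
  refine t2_iff_nhds.mp ‹_› (Filter.inf_neBot_iff.2 ?_)
  intro O hO V hV
  exact Set.inter_comm V O ▸ mem_closure_iff_nhds.1 (h V hV) O hO

lemma aux_extraction {A : Type u} [CommGroup A] [TopologicalSpace A] [IsTopologicalGroup A]
    [T2Space A] (hA : IsMinimalGroup A)
    {G : Type u} [Group G] [TopologicalSpace G] [IsTopologicalGroup G]
    (π : G →* A) (S K : Subgroup G)
    (hKcomm : ∀ k ∈ K, ∀ g : G, k * g = g * k)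
    (hT1 : ∀ a : A, (∀ V ∈ 𝓝 (1 : G), a ∈ closure (π '' ((V * (K : Set G)) ∩ (S : Set G))))
      → a = 1) :
    ∀ W ∈ 𝓝 (1 : A), ∃ V ∈ 𝓝 (1 : G), π '' ((V * (K : Set G)) ∩ (S : Set G)) ⊆ W := by
  classical
  set Φ : Set G → Set A := fun V => π '' ((V * (K : Set G)) ∩ (S : Set G)) with hΦ
  -- basic properties of Φ
  have Φmono : ∀ {V V' : Set G}, V ⊆ V' → Φ V ⊆ Φ V' := by
    intro V V' hVV'
    exact Set.image_mono  (Set.inter_subset_inter_left _ (Set.mul_subset_mul_right hVV'))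
  have Φone : ∀ {V : Set G}, (1 : G) ∈ V → (1 : A) ∈ Φ V := by
    intro V hV
    exact ⟨1, ⟨⟨1, hV, 1, K.one_mem, mul_one 1⟩, S.one_mem⟩, map_one π⟩
  have ΦmulG : ∀ {V V' : Set G}, (V * (K : Set G)) * (V' * (K : Set G)) ⊆
      (V * V') * (K : Set G) := by
    rintro V V' z ⟨_, ⟨v, hv, k, hk, rfl⟩, _, ⟨v', hv', k', hk', rfl⟩, rfl⟩
    have key : v * k * (v' * k') = (v * v') * (k * k') := by
      rw [mul_assoc v k (v' * k'), ← mul_assoc k v' k', hKcomm k hk v']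
      group
    have : (v * v') * (k * k') ∈ (V * V') * (K : Set G) :=
      Set.mul_mem_mul (Set.mul_mem_mul hv hv') (K.mul_mem hk hk')
    simpa [← key] using this
  have Φmul : ∀ {V V' : Set G}, Φ V * Φ V' ⊆ Φ (V * V') := by
    rintro V V' z ⟨_, ⟨x, hx, rfl⟩, _, ⟨y, hy, rfl⟩, rfl⟩
    have hxy : x * y ∈ ((V * V') * (K : Set G)) ∩ (S : Set G) :=
      ⟨ΦmulG (Set.mul_mem_mul hx.1 hy.1), S.mul_mem hx.2 hy.2⟩
    exact ⟨x * y, hxy, by simp [map_mul]⟩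
  have Φinv : ∀ {V : Set G}, (Φ V)⁻¹ ⊆ Φ V⁻¹ := by
    rintro V z hz
    obtain ⟨x, ⟨⟨v, hv, k, hk, rfl⟩, hxS⟩, hπ⟩ := hz
    refine ⟨(v * k)⁻¹, ⟨⟨v⁻¹, Set.inv_mem_inv.2 hv, k⁻¹, K.inv_mem hk, ?_⟩, S.inv_mem hxS⟩, ?_⟩
    · rw [mul_inv_rev, hKcomm k⁻¹ (K.inv_mem hk) v⁻¹]
    · rw [map_inv, hπ, inv_inv]
  -- neighborhoods of 1 for σ
  have hmulσ : ∀ {V : Set G}, V ∈ 𝓝 (1 : G) → ∃ V' ∈ 𝓝 (1 : G), V' * V' ⊆ V := by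
    intro V hV
    obtain ⟨V', hV'o, hV'1, hV'⟩ := exists_open_nhds_one_mul_subset hV
    exact ⟨V', hV'o.mem_nhds hV'1, hV'⟩
  have hinvσ : ∀ {V : Set G}, V ∈ 𝓝 (1 : G) → V⁻¹ ∈ 𝓝 (1 : G) :=
    fun hV => inv_mem_nhds_one G hV
  -- the group filter basis on A
  let gfb : GroupFilterBasis A :=
    { sets := {B | ∃ U ∈ 𝓝 (1 : A), ∃ V ∈ 𝓝 (1 : G), B = U * Φ V}
      nonempty := ⟨Set.univ * Φ Set.univ,
        Set.univ, Filter.univ_mem, Set.univ, Filter.univ_mem, rfl⟩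
      inter_sets := by
        rintro B₁ B₂ ⟨U₁, hU₁, V₁, hV₁, rfl⟩ ⟨U₂, hU₂, V₂, hV₂, rfl⟩
        refine ⟨(U₁ ∩ U₂) * Φ (V₁ ∩ V₂),
          ⟨U₁ ∩ U₂, Filter.inter_mem hU₁ hU₂, V₁ ∩ V₂, Filter.inter_mem hV₁ hV₂, rfl⟩,
          Set.subset_inter ?_ ?_⟩
        · exact Set.mul_subset_mul Set.inter_subset_left (Φmono Set.inter_subset_left)
        · exact Set.mul_subset_mul Set.inter_subset_right (Φmono Set.inter_subset_right)
      one' := by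
        rintro B ⟨U, hU, V, hV, rfl⟩
        have := Set.mul_mem_mul (mem_of_mem_nhds hU) (Φone (mem_of_mem_nhds hV))
        simpa using this
      mul' := by
        rintro B ⟨U, hU, V, hV, rfl⟩
        obtain ⟨U', hU'o, hU'1, hU'sub⟩ := exists_open_nhds_one_mul_subset hU
        obtain ⟨V', hV', hV'sub⟩ := hmulσ hV
        refine ⟨U' * Φ V', ⟨U', hU'o.mem_nhds hU'1, V', hV', rfl⟩, ?_⟩
        rintro z ⟨b₁, hb₁, b₂, hb₂, rfl⟩
        obtain ⟨u₁, hu₁, φ₁, hφ₁, rfl⟩ := hb₁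
        obtain ⟨u₂, hu₂, φ₂, hφ₂, rfl⟩ := hb₂
        have key : u₁ * φ₁ * (u₂ * φ₂) = (u₁ * u₂) * (φ₁ * φ₂) := mul_mul_mul_comm u₁ φ₁ u₂ φ₂
        have h1 : u₁ * u₂ ∈ U := hU'sub (Set.mul_mem_mul hu₁ hu₂)
        have h2 : φ₁ * φ₂ ∈ Φ V := Φmono hV'sub (Φmul (Set.mul_mem_mul hφ₁ hφ₂))
        show (u₁ * φ₁) * (u₂ * φ₂) ∈ U * Φ V
        rw [key]
        exact Set.mul_mem_mul h1 h2
      inv' := by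
        rintro B ⟨U, hU, V, hV, rfl⟩
        refine ⟨U⁻¹ * Φ V⁻¹, ⟨U⁻¹, inv_mem_nhds_one A hU, V⁻¹, hinvσ hV, rfl⟩, ?_⟩
        rintro x ⟨u, hu, φ, hφ, rfl⟩
        have h1 : u⁻¹ ∈ U := Set.mem_inv.mp hu
        have h2 : φ⁻¹ ∈ Φ V := by
          have := Φinv (V := V⁻¹) (Set.inv_mem_inv.mpr hφ)
          rwa [inv_inv] at this
        show ((u * φ)⁻¹ : A) ∈ U * Φ V
        have := Set.mul_mem_mul h1 h2
        rw [mul_inv_rev, mul_comm φ⁻¹ u⁻¹]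
        exact this
      conj' := by
        rintro x₀ B ⟨U, hU, V, hV, rfl⟩
        exact ⟨U * Φ V, ⟨U, hU, V, hV, rfl⟩, by
          intro x hx
          simpa [mul_inv_cancel_comm] using hx⟩ }
  -- the new topology on A
  have tgT : @IsTopologicalGroup A gfb.topology _ := gfb.isTopologicalGroup
  have hLe : (inferInstance : TopologicalSpace A) ≤ gfb.topology := by
    apply le_of_nhds_le_nhds
    intro x s hs
    obtain ⟨B, hB, hBs⟩ := (gfb.nhds_hasBasis x).mem_iff.mp hs
    obtain ⟨U, hU, V, hV, rfl⟩ := hB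
    have hUsub : U ⊆ U * Φ V := by
      intro u hu
      have := Set.mul_mem_mul hu (Φone (mem_of_mem_nhds hV))
      simpa using this
    have himg : (fun y => x * y) '' U ∈ 𝓝 x := by
      have := (Homeomorph.mulLeft x).isOpenMap.image_mem_nhds hU
      simpa using this
    exact Filter.mem_of_superset himg
      (subset_trans (Set.image_mono  hUsub) hBs)
  have ht2 : @T2Space A gfb.topology := by
    refine @IsTopologicalGroup.t2Space_of_one_sep A gfb.topology _ tgT ?_
    intro x hx
    by_contra hc
    push_neg at hc
    refine hx (hT1 x ?_)
    intro V hV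
    refine aux_mem_closure_of_mul ?_
    intro U hU
    exact hc _ (gfb.mem_nhds_one ⟨U, hU, V, hV, rfl⟩)
  have heq := hA gfb.topology hLe tgT ht2
  intro W hW
  have hW' : W ∈ @nhds A gfb.topology 1 := by rw [heq]; exact hW
  obtain ⟨B, hB, hBW⟩ := gfb.nhds_one_hasBasis.mem_iff.mp hW'
  obtain ⟨U, hU, V, hV, rfl⟩ := hB
  refine ⟨V, hV, fun φ hφ => hBW ?_⟩
  have := Set.mul_mem_mul (mem_of_mem_nhds hU) hφ
  simpa using this

/-- If `A` is a minimal abelian topological group and `F` a finite discrete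
group, then `A × F` is c-minimal. -/
theorem prod_minimal_abelian_finite_cminimal {A : Type u} [CommGroup A] [TopologicalSpace A]
    [IsTopologicalGroup A] [T2Space A] {F : Type u} [Group F] [Finite F] [TopologicalSpace F]
    [DiscreteTopology F] (hA : IsMinimalGroup A) : IsCMinimalGroup (A × F) := by
  classical
  haveI : IsTopologicalGroup F :=
    { toContinuousMul := inferInstance, toContinuousInv := inferInstance }
  intro H hH σ hle tgσ t2σ
  letI τ' : TopologicalSpace ↥H := instTopologicalSpaceSubtype
  set π : ↥H →* A := (MonoidHom.fst A F).comp H.subtype with hπdef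
  set Nk : Subgroup ↥H := ((MonoidHom.snd A F).comp H.subtype).ker with hNkdef
  have hπapp : ∀ h : ↥H, π h = (↑h : A × F).1 := fun h => rfl
  have hNkmem : ∀ h : ↥H, h ∈ Nk ↔ (↑h : A × F).2 = 1 := fun h => Iff.rfl
  -- basic σ facts
  have hmulσ : ∀ {V : Set ↥H}, V ∈ @nhds ↥H σ 1 →
      ∃ V' ∈ @nhds ↥H σ 1, V' * V' ⊆ V := by
    letI := σ; haveI := tgσ
    intro V hV
    obtain ⟨V', hV'o, hV'1, hV'⟩ := exists_open_nhds_one_mul_subset hV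
    exact ⟨V', hV'o.mem_nhds hV'1, hV'⟩
  have hclτσ : ∀ s : Set ↥H, closure s ⊆ @closure ↥H σ s := by
    intro s
    refine closure_minimal ?_ ?_
    · exact (by letI := σ; exact subset_closure : s ⊆ @closure ↥H σ s)
    · have h1 : @IsOpen ↥H σ ((@closure ↥H σ s)ᶜ) := by
        letI := σ; exact isClosed_closure.isOpen_compl
      exact isOpen_compl_iff.mp (IsOpen.mono h1 hle)
  -- the closed subset NA of A
  set NA : Set A := {a : A | ((a, 1) : A × F) ∈ H} with hNAdef
  have hNAclosed : IsClosed NA := hH.preimage (continuous_id.prodMk continuous_const)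
  have hπNk : ∀ h : ↥H, h ∈ (Nk : Set ↥H) → π h ∈ NA := by
    intro h hh
    have h2 : ((π h, 1) : A × F) = ↑h := Prod.ext rfl ((hNkmem h).mp hh).symm
    show ((π h, 1) : A × F) ∈ H
    rw [h2]
    exact h.2
  -- lifting lemma
  have hLIFT : ∀ s : Set ↥H, s ⊆ (Nk : Set ↥H) → ∀ a : A, a ∈ closure (π '' s) →
      ((a, 1) : A × F) ∈ closure ((↑) '' s : Set (A × F)) := by
    intro s hs a ha
    have hset : ((↑) '' s : Set (A × F)) = (π '' s) ×ˢ ({1} : Set F) := by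
      apply Set.Subset.antisymm
      · rintro x ⟨h, hhs, rfl⟩
        exact ⟨⟨h, hhs, rfl⟩, (hNkmem h).mp (hs hhs)⟩
      · rintro ⟨b, f⟩ ⟨⟨h, hhs, hb⟩, hf⟩
        have hf1 : f = 1 := hf
        have h3 : (↑h : A × F).2 = 1 := (hNkmem h).mp (hs hhs)
        have h2 : (↑h : A × F) = (b, f) := by
          apply Prod.ext
          · exact hb
          · rw [h3, hf1]
        exact ⟨h, hhs, h2⟩
    rw [hset, closure_prod_eq]
    exact ⟨ha, by simp [(isClosed_discrete ({1} : Set F)).closure_eq]⟩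
  have hLIFTmem : ∀ s : Set ↥H, s ⊆ (Nk : Set ↥H) → ∀ a : A, a ∈ closure (π '' s) →
      ((a, 1) : A × F) ∈ H := by
    intro s hs a ha
    have h1 := hLIFT s hs a ha
    have h2 : closure ((↑) '' s : Set (A × F)) ⊆ (H : Set (A × F)) :=
      closure_minimal (by rintro x ⟨h, _, rfl⟩; exact h.2) hH
    exact h2 h1
  have hLIFTcl : ∀ s : Set ↥H, s ⊆ (Nk : Set ↥H) → ∀ a : A, a ∈ closure (π '' s) →
      ∀ hm : ((a, 1) : A × F) ∈ H, (⟨(a, 1), hm⟩ : ↥H) ∈ closure s := by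
    intro s hs a ha hm
    exact (closure_subtype (x := (⟨(a, 1), hm⟩ : ↥H))).mpr (hLIFT s hs a ha)
  -- Construction 1 : Hausdorff condition
  have hT1₁ : ∀ a : A, (∀ V ∈ @nhds ↥H σ 1,
      a ∈ closure (π '' ((V * ((⊥ : Subgroup ↥H) : Set ↥H)) ∩ ((⊤ : Subgroup ↥H) : Set ↥H))))
      → a = 1 := by
    intro a ha
    have ha' : ∀ V ∈ @nhds ↥H σ 1, a ∈ closure (π '' V) := by
      intro V hV
      have h0 := ha V hV
      have hEq : (V * ((⊥ : Subgroup ↥H) : Set ↥H)) ∩ ((⊤ : Subgroup ↥H) : Set ↥H) = V := by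
        rw [Subgroup.coe_bot, Subgroup.coe_top, Set.inter_univ, Set.mul_singleton]
        simp
      rwa [hEq] at h0
    set Sl : F → Set ↥H := fun f => {h : ↥H | (↑h : A × F).2 = f} with hSldef
    have hpig : ∃ f : F, ∀ V ∈ @nhds ↥H σ 1, a ∈ closure (π '' (V ∩ Sl f)) := by
      by_contra hc
      push_neg at hc
      choose Vf hVf hVf' using hc
      have hVmem : (⋂ f, Vf f) ∈ @nhds ↥H σ 1 := Filter.iInter_mem.mpr hVf
      have h1 : a ∈ closure (π '' (⋂ f, Vf f)) := ha' _ hVmem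
      have h2 : π '' (⋂ f, Vf f) ⊆ ⋃ f, closure (π '' ((⋂ f', Vf f') ∩ Sl f)) := by
        rintro b ⟨h, hh, rfl⟩
        exact Set.mem_iUnion.mpr ⟨(↑h : A × F).2, subset_closure ⟨h, ⟨hh, rfl⟩, rfl⟩⟩
      have h3 : a ∈ ⋃ f, closure (π '' ((⋂ f', Vf f') ∩ Sl f)) :=
        closure_minimal h2 (isClosed_iUnion_of_finite fun f => isClosed_closure) h1
      obtain ⟨f, hf⟩ := Set.mem_iUnion.mp h3
      exact hVf' f (closure_mono (Set.image_mono 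
        (Set.inter_subset_inter_left _ (Set.iInter_subset _ f))) hf)
    obtain ⟨f, haf⟩ := hpig
    have hSlne : (Sl f).Nonempty := by
      have h4 := haf Set.univ Filter.univ_mem
      rcases (π '' (Set.univ ∩ Sl f)).eq_empty_or_nonempty with he | hne
      · rw [he, closure_empty] at h4
        exact absurd h4 (Set.notMem_empty a)
      · obtain ⟨b, h, hh, _⟩ := hne
        exact ⟨h, hh.2⟩
    obtain ⟨h₀, hh₀⟩ := hSlne
    have hyV : ∀ V ∈ @nhds ↥H σ 1,
        a * (π h₀)⁻¹ ∈ closure (π '' (((· * h₀⁻¹) '' V) ∩ (Nk : Set ↥H))) := by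
      intro V hV
      have h1 : a * (π h₀)⁻¹ ∈ (· * (π h₀)⁻¹) '' closure (π '' (V ∩ Sl f)) :=
        ⟨a, haf V hV, rfl⟩
      have h2 := image_closure_subset_closure_image
        (continuous_mul_right (π h₀)⁻¹) h1
      refine closure_mono ?_ h2
      rintro b ⟨_, ⟨h, ⟨hhV, hhSl⟩, rfl⟩, rfl⟩
      refine ⟨h * h₀⁻¹, ⟨⟨h, hhV, rfl⟩, ?_⟩, ?_⟩
      · show h * h₀⁻¹ ∈ Nk
        rw [hNkmem]
        have h5 : (↑h : A × F).2 = f := hhSl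
        have h6 : (↑h₀ : A × F).2 = f := hh₀
        show ((↑h : A × F) * (↑h₀ : A × F)⁻¹).2 = 1
        simp [h5, h6]
      · simp [map_mul, map_inv]
    have hsub0 : ∀ V : Set ↥H, ((· * h₀⁻¹) '' V) ∩ (Nk : Set ↥H) ⊆ (Nk : Set ↥H) :=
      fun V => Set.inter_subset_right
    have hmem : ((a * (π h₀)⁻¹, 1) : A × F) ∈ H :=
      hLIFTmem _ (hsub0 _) _ (hyV Set.univ Filter.univ_mem)
    set y : ↥H := ⟨(a * (π h₀)⁻¹, 1), hmem⟩ with hydef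
    have hyc : ∀ V ∈ @nhds ↥H σ 1, y * h₀ ∈ @closure ↥H σ V := by
      intro V hV
      have h1 : y ∈ closure (((· * h₀⁻¹) '' V) ∩ (Nk : Set ↥H)) :=
        hLIFTcl _ (hsub0 _) _ (hyV V hV) hmem
      have h2 : y ∈ @closure ↥H σ ((· * h₀⁻¹) '' V) :=
        hclτσ _ (closure_mono Set.inter_subset_left h1)
      letI := σ; haveI := tgσ
      have h3 : y * h₀ ∈ (· * h₀) '' closure ((· * h₀⁻¹) '' V) := ⟨y, h2, rfl⟩
      have h4 := image_closure_subset_closure_image (continuous_mul_right h₀) h3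
      refine closure_mono ?_ h4
      rintro z ⟨w, ⟨v, hv, rfl⟩, rfl⟩
      simpa using hv
    have hz : y * h₀ = 1 := by
      letI := σ; haveI := tgσ; haveI := t2σ
      exact aux_eq_one hyc
    have hyh : y = h₀⁻¹ := eq_inv_of_mul_eq_one_left hz
    have hfst : a * (π h₀)⁻¹ = (π h₀)⁻¹ := by
      have h7 := congrArg (fun z : ↥H => (↑z : A × F).1) hyh
      exact h7
    exact mul_right_cancel (b := (π h₀)⁻¹) (hfst.trans (one_mul (π h₀)⁻¹).symm)
  have EXT1 : ∀ W ∈ 𝓝 (1 : A), ∃ V ∈ @nhds ↥H σ 1,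
      π '' ((V * ((⊥ : Subgroup ↥H) : Set ↥H)) ∩ ((⊤ : Subgroup ↥H) : Set ↥H)) ⊆ W := by
    letI := σ; haveI := tgσ
    exact aux_extraction hA π ⊤ ⊥
      (by intro k hk g; rw [Subgroup.mem_bot.mp hk, one_mul, mul_one]) hT1₁
  have EXT1' : ∀ W ∈ 𝓝 (1 : A), ∃ V ∈ @nhds ↥H σ 1, π '' V ⊆ W := by
    intro W hW
    obtain ⟨V, hV, hs⟩ := EXT1 W hW
    refine ⟨V, hV, ?_⟩
    rintro b ⟨h, hh, rfl⟩
    have hmem : h ∈ (V * ((⊥ : Subgroup ↥H) : Set ↥H)) ∩ ((⊤ : Subgroup ↥H) : Set ↥H) := by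
      constructor
      · rw [Subgroup.coe_bot]
        simpa using Set.mul_mem_mul hh (Set.mem_singleton (1 : ↥H))
      · simp
    exact hs ⟨h, hmem, rfl⟩
  -- π is σ-continuous
  have hπσ : @Continuous ↥H A σ _ π := by
    letI := σ; haveI := tgσ
    refine continuous_of_continuousAt_one π ?_
    rw [ContinuousAt, map_one]
    intro W hW
    obtain ⟨V, hV, hVW⟩ := EXT1' W hW
    rw [Filter.mem_map]
    exact Filter.mem_of_superset hV (fun h hh => hVW ⟨h, hh, rfl⟩)
  have hkerσ : @IsClosed ↥H σ {h : ↥H | π h = 1} := by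
    letI := σ; haveI := tgσ
    exact isClosed_eq hπσ continuous_const
  -- Nk is σ-closed
  have hNkσsub : @closure ↥H σ (Nk : Set ↥H) ⊆ (Nk : Set ↥H) := by
    intro x hx
    by_contra hxN
    have h1 : π x ∈ closure (π '' (Nk : Set ↥H)) := by
      letI := σ
      exact image_closure_subset_closure_image hπσ ⟨x, hx, rfl⟩
    have hπx : π x ∈ NA :=
      closure_minimal (by rintro b ⟨h, hh, rfl⟩; exact hπNk h hh) hNAclosed h1
    set n : ↥H := ⟨(π x, 1), hπx⟩ with hndef
    have hnNk : n ∈ Nk := (hNkmem n).mpr rfl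
    set c : ↥H := x * n⁻¹ with hcdef
    have hπn : π n = π x := rfl
    have hπc : π c = 1 := by
      rw [hcdef, map_mul, map_inv, hπn]
      exact mul_inv_cancel (π x)
    have hcM : c ∈ @closure ↥H σ (Nk : Set ↥H) := by
      letI := σ; haveI := tgσ
      have h2 : c ∈ (· * n⁻¹) '' closure (Nk : Set ↥H) := ⟨x, hx, rfl⟩
      have h3 := image_closure_subset_closure_image (continuous_mul_right n⁻¹) h2
      refine closure_mono ?_ h3
      rintro z ⟨m, hm, rfl⟩
      show m * n⁻¹ ∈ (Nk : Set ↥H)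
      exact Nk.mul_mem hm (Nk.inv_mem hnNk)
    have hc1 : c ≠ 1 := by
      intro hc
      apply hxN
      have hxn : x = n := by rwa [hcdef, mul_inv_eq_one] at hc
      rw [hxn]
      exact hnNk
    obtain ⟨Kc, hKc⟩ : ∃ Kc : Subgroup ↥H, (Kc : Set ↥H) = @closure ↥H σ (Nk : Set ↥H) := by
      letI := σ; haveI := tgσ
      exact ⟨Nk.topologicalClosure, rfl⟩
    set K : Subgroup ↥H := Kc ⊓ π.ker with hKdef
    have hcK : c ∈ K := by
      rw [hKdef, Subgroup.mem_inf]
      refine ⟨?_, MonoidHom.mem_ker.mpr hπc⟩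
      rw [← SetLike.mem_coe, hKc]
      exact hcM
    have hKsubker : (K : Set ↥H) ⊆ {h : ↥H | π h = 1} := by
      intro k hk
      exact MonoidHom.mem_ker.mp ((Subgroup.mem_inf).mp hk).2
    have hKsubcl : (K : Set ↥H) ⊆ @closure ↥H σ (Nk : Set ↥H) := by
      intro k hk
      rw [← hKc]
      exact ((Subgroup.mem_inf).mp hk).1
    have hKcomm : ∀ k ∈ K, ∀ g : ↥H, k * g = g * k := by
      intro k hk g
      have hset : (Nk : Set ↥H) ⊆ {z : ↥H | z * g = g * z} := by
        intro m hm
        have hm2 : (↑m : A × F).2 = 1 := (hNkmem m).mp hm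
        show m * g = g * m
        apply Subtype.ext
        rw [Subgroup.coe_mul, Subgroup.coe_mul]
        apply Prod.ext
        · simp [mul_comm]
        · simp [hm2]
      have hcl : @closure ↥H σ (Nk : Set ↥H) ⊆ {z : ↥H | z * g = g * z} := by
        letI := σ; haveI := tgσ; haveI := t2σ
        exact closure_minimal hset (isClosed_eq (continuous_mul_right g) (continuous_mul_left g))
      exact hcl (hKsubcl hk)
    have hT1₂ : ∀ a : A, (∀ V ∈ @nhds ↥H σ 1,
        a ∈ closure (π '' ((V * (K : Set ↥H)) ∩ (Nk : Set ↥H)))) → a = 1 := by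
      intro a ha
      have hmem : ((a, 1) : A × F) ∈ H :=
        hLIFTmem _ Set.inter_subset_right _ (ha Set.univ Filter.univ_mem)
      set y : ↥H := ⟨(a, 1), hmem⟩ with hydef
      have hyK : ∀ W ∈ @nhds ↥H σ 1, y ∈ W * (K : Set ↥H) := by
        intro W hW
        obtain ⟨V, hV, hVW⟩ := hmulσ hW
        have h1' : y ∈ closure ((V * (K : Set ↥H)) ∩ (Nk : Set ↥H)) :=
          hLIFTcl _ Set.inter_subset_right _ (ha V hV) hmem
        have h2 : y ∈ @closure ↥H σ (V * (K : Set ↥H)) :=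
          hclτσ _ (closure_mono Set.inter_subset_left h1')
        have h3 : y ∈ V * (V * (K : Set ↥H)) := by
          letI := σ; haveI := tgσ
          exact aux_closure_subset_mul hV _ h2
        rw [← mul_assoc] at h3
        exact Set.mul_subset_mul_right hVW h3
      have hyclK : y ∈ @closure ↥H σ (K : Set ↥H) := by
        letI := σ; haveI := tgσ
        exact aux_mem_closure_of_mul hyK
      have h5 : y ∈ {h : ↥H | π h = 1} := by
        have h6 : @closure ↥H σ (K : Set ↥H) ⊆ {h : ↥H | π h = 1} := by
          letI := σ
          exact closure_minimal hKsubker hkerσ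
        exact h6 hyclK
      have h7 : π y = a := rfl
      rw [← h7]
      exact h5
    have EXT2 : ∀ W ∈ 𝓝 (1 : A), ∃ V ∈ @nhds ↥H σ 1,
        π '' ((V * (K : Set ↥H)) ∩ (Nk : Set ↥H)) ⊆ W := by
      letI := σ; haveI := tgσ
      exact aux_extraction hA π Nk K hKcomm hT1₂
    set Gf : Filter ↥H := @nhds ↥H σ c ⊓ 𝓟 (Nk : Set ↥H) with hGfdef
    haveI hGfne : Gf.NeBot := by
      letI := σ
      exact mem_closure_iff_clusterPt.mp hcM
    have hGfτ : Gf ≤ @nhds ↥H τ' 1 := by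
      intro T hT
      have h1' : (1 : ↥H) = ⟨(1 : A × F), H.one_mem⟩ := rfl
      rw [h1', nhds_subtype_eq_comap] at hT
      obtain ⟨B, hB, hBT⟩ := hT
      have h2 : (1 : A × F) = ((1 : A), (1 : F)) := rfl
      rw [h2, mem_nhds_prod_iff] at hB
      obtain ⟨WA, hWA, WF, hWF, hprod⟩ := hB
      obtain ⟨V, hV, hVW⟩ := EXT2 WA hWA
      have hG' : (· * c⁻¹) ⁻¹' V ∈ @nhds ↥H σ c := by
        letI := σ; haveI := tgσ
        have hcont : ContinuousAt (· * c⁻¹) c := (continuous_mul_right c⁻¹).continuousAt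
        refine hcont.preimage_mem_nhds ?_
        rw [mul_inv_cancel]
        exact hV
      have hXG : ((· * c⁻¹) ⁻¹' V) ∩ (Nk : Set ↥H) ∈ Gf :=
        Filter.inter_mem_inf hG' (Filter.mem_principal_self _)
      refine Filter.mem_of_superset hXG ?_
      rintro h ⟨hhV, hhN⟩
      apply hBT
      refine hprod ?_
      have hπh : π h ∈ WA := by
        refine hVW ⟨h, ⟨?_, hhN⟩, rfl⟩
        have h8 : h = (h * c⁻¹) * c := by group
        rw [h8]
        exact Set.mul_mem_mul hhV hcK
      refine ⟨hπh, ?_⟩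
      show (↑h : A × F).2 ∈ WF
      rw [(hNkmem h).mp hhN]
      exact mem_of_mem_nhds hWF
    have hGfσ1 : Gf ≤ @nhds ↥H σ 1 := le_trans hGfτ (nhds_mono hle)
    have hceq : c = 1 := by
      have hne : (@nhds ↥H σ c ⊓ @nhds ↥H σ 1).NeBot :=
        Filter.neBot_of_le (le_inf inf_le_left hGfσ1)
      exact (@t2_iff_nhds ↥H σ).mp t2σ hne
    exact hc1 hceq
  have hNkσclosed : @IsClosed ↥H σ (Nk : Set ↥H) := by
    letI := σ
    exact isClosed_of_closure_subset hNkσsub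
  -- Nk is σ-open
  have hNkσopen : @IsOpen ↥H σ (Nk : Set ↥H) := by
    have hcompl : ((Nk : Set ↥H))ᶜ = ⋃ f : F, {h : ↥H | (↑h : A × F).2 = f ∧ f ≠ 1} := by
      ext h
      simp only [Set.mem_compl_iff, SetLike.mem_coe, Set.mem_iUnion, Set.mem_setOf_eq]
      constructor
      · intro hh
        exact ⟨(↑h : A × F).2, rfl, fun he => hh ((hNkmem h).mpr he)⟩
      · rintro ⟨f, hf, hne⟩ hh
        exact hne (hf ▸ (hNkmem h).mp hh)
    have hclosed : @IsClosed ↥H σ ((Nk : Set ↥H))ᶜ := by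
      rw [hcompl]
      letI := σ; haveI := tgσ
      refine isClosed_iUnion_of_finite ?_
      intro f
      by_cases hf1 : f = 1
      · have hemp : {h : ↥H | (↑h : A × F).2 = f ∧ f ≠ 1} = ∅ := by
          ext h; simp [hf1]
        rw [hemp]
        exact isClosed_empty
      · have heq : {h : ↥H | (↑h : A × F).2 = f ∧ f ≠ 1} = {h : ↥H | (↑h : A × F).2 = f} := by
          ext h; simp [hf1]
        rw [heq]
        rcases Set.eq_empty_or_nonempty {h : ↥H | (↑h : A × F).2 = f} with he | ⟨g₀, hg₀⟩
        · rw [he]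
          exact isClosed_empty
        · have hg : (↑g₀ : A × F).2 = f := hg₀
          have heq2 : {h : ↥H | (↑h : A × F).2 = f} = (· * g₀⁻¹) ⁻¹' (Nk : Set ↥H) := by
            ext h
            constructor
            · intro hh
              have hh' : (↑h : A × F).2 = f := hh
              show h * g₀⁻¹ ∈ (Nk : Set ↥H)
              refine (hNkmem _).mpr ?_
              show (↑h : A × F).2 * ((↑g₀ : A × F).2)⁻¹ = 1
              rw [hh', hg]
              exact mul_inv_cancel f
            · intro hh
              have h2 : ((↑h : A × F).2) * ((↑g₀ : A × F).2)⁻¹ = 1 :=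
                (hNkmem _).mp hh
              exact (mul_inv_eq_one.mp h2).trans hg
          rw [heq2]
          exact hNkσclosed.preimage (continuous_mul_right g₀⁻¹)
    have hoc := hclosed.isOpen_compl
    rwa [compl_compl] at hoc
  -- conclusion
  refine IsTopologicalGroup.ext tgσ inferInstance ?_
  refine le_antisymm ?_ (nhds_mono hle)
  intro T hT
  have h1 : (1 : ↥H) = ⟨(1 : A × F), H.one_mem⟩ := rfl
  rw [h1, nhds_subtype_eq_comap] at hT
  obtain ⟨B, hB, hBT⟩ := hT
  have h2 : (1 : A × F) = ((1 : A), (1 : F)) := rfl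
  rw [h2, mem_nhds_prod_iff] at hB
  obtain ⟨WA, hWA, WF, hWF, hprod⟩ := hB
  have h3 : π ⁻¹' WA ∈ @nhds ↥H σ 1 := by
    letI := σ; haveI := tgσ
    have := hπσ.continuousAt (x := (1 : ↥H))
    rw [ContinuousAt, map_one] at this
    exact this hWA
  have h4 : π ⁻¹' WA ∩ (Nk : Set ↥H) ∈ @nhds ↥H σ 1 := by
    letI := σ; haveI := tgσ
    exact Filter.inter_mem h3 (hNkσopen.mem_nhds Nk.one_mem)
  refine Filter.mem_of_superset h4 ?_
  rintro h ⟨hhW, hhN⟩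
  apply hBT
  refine hprod ?_
  refine ⟨hhW, ?_⟩
  show (↑h : A × F).2 ∈ WF
  rw [(hNkmem h).mp hhN]
  exact mem_of_mem_nhds hWF
end

section
/- Let G = A × F be a topological direct product, where A is an abelian topological group and F is a finite (discrete) group. If A is totally minimal, then G is c-totally minimal. -/
open Filter Topology
open scoped Manifold

universe u

/-- A topological group is *totally minimal* if every continuous surjective group
homomorphism onto a Hausdorff topological group is an open map. -/
def IsTotallyMinimalGroup (G : Type u) [Group G] [TopologicalSpace G] : Prop :=
  ∀ (H : Type u) [Group H] [TopologicalSpace H] [IsTopologicalGroup H] [T2Space H]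
    (f : G →* H), Continuous f → Function.Surjective f → IsOpenMap f

/-- A topological group is *c-totally minimal* if every closed subgroup (with the
subspace topology) is totally minimal. -/
def IsCTotallyMinimalGroup (G : Type u) [Group G] [TopologicalSpace G] : Prop :=
  ∀ H : Subgroup G, IsClosed (H : Set G) → IsTotallyMinimalGroup H

open scoped Pointwise

private lemma closed_graph_aux {X Y : Type*} [TopologicalSpace X] [TopologicalSpace Y]
    [T2Space Y] {S : Set X} (hS : IsClosed S) {c : {x // x ∈ S} → Y} (hc : Continuous c) :
    IsClosed {p : X × Y | ∃ h : p.1 ∈ S, c ⟨p.1, h⟩ = p.2} := by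
  have hemb : Topology.IsClosedEmbedding
      (Prod.map ((↑) : {x // x ∈ S} → X) (id : Y → Y)) := by
    refine ⟨(Topology.IsClosedEmbedding.subtypeVal (p := (· ∈ S)) hS).toIsEmbedding.prodMap
      Topology.IsEmbedding.id, ?_⟩
    have : Set.range (Prod.map ((↑) : {x // x ∈ S} → X) (id : Y → Y)) = S ×ˢ Set.univ := by
      ext p
      constructor
      · rintro ⟨⟨a, y⟩, rfl⟩; exact ⟨a.2, Set.mem_univ _⟩
      · rintro ⟨hp, -⟩; exact ⟨(⟨p.1, hp⟩, p.2), rfl⟩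
    rw [this]; exact hS.prod isClosed_univ
  have hset : IsClosed {q : {x // x ∈ S} × Y | c q.1 = q.2} :=
    isClosed_eq (hc.comp continuous_fst) continuous_snd
  have himg := hemb.isClosedMap _ hset
  convert himg using 1
  ext p
  constructor
  · rintro ⟨h, hcp⟩
    exact ⟨(⟨p.1, h⟩, p.2), hcp, rfl⟩
  · rintro ⟨⟨a, y⟩, hq, rfl⟩
    exact ⟨a.2, by simpa using hq⟩

private lemma open_criterion {G K : Type*} [Group G] [TopologicalSpace G] [IsTopologicalGroup G]
    [Group K] [TopologicalSpace K] [IsTopologicalGroup K] (f : G →* K)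
    (h : ∀ U : Set G, IsOpen U → (1 : G) ∈ U → f '' U ∈ 𝓝 (1 : K)) : IsOpenMap f := by
  intro W hW
  rw [isOpen_iff_mem_nhds]
  rintro k ⟨x, hxW, rfl⟩
  have h1 : f '' ((fun y => x⁻¹ * y) '' W) ∈ 𝓝 (1 : K) := by
    apply h _ ((Homeomorph.mulLeft x⁻¹).isOpenMap W hW)
    exact ⟨x, hxW, by simp⟩
  have h2 := Filter.image_mem_map (m := ⇑(Homeomorph.mulLeft (f x))) h1
  rw [(Homeomorph.mulLeft (f x)).map_nhds_eq 1] at h2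
  have hset : ⇑(Homeomorph.mulLeft (f x)) '' (f '' ((fun y => x⁻¹ * y) '' W)) = f '' W := by
    ext k
    constructor
    · rintro ⟨_, ⟨_, ⟨w, hw, rfl⟩, rfl⟩, rfl⟩
      refine ⟨w, hw, ?_⟩
      show f w = f x * f (x⁻¹ * w)
      symm
      rw [map_mul, map_inv, ← mul_assoc, mul_inv_cancel, one_mul]
    · rintro ⟨w, hw, rfl⟩
      have hmem : f (x⁻¹ * w) ∈ f '' ((fun y => x⁻¹ * y) '' W) :=
        ⟨x⁻¹ * w, ⟨w, hw, rfl⟩, rfl⟩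
      refine ⟨f (x⁻¹ * w), hmem, ?_⟩
      show f x * f (x⁻¹ * w) = f w
      rw [map_mul, map_inv, ← mul_assoc, mul_inv_cancel, one_mul]
  rw [hset] at h2
  simpa using h2

private lemma sep_finite {K : Type*} [Group K] [TopologicalSpace K] [IsTopologicalGroup K]
    [T2Space K] {Φ : Set K} (hfin : Φ.Finite) :
    ∃ V : Set K, IsOpen V ∧ (1 : K) ∈ V ∧ ∀ c ∈ Φ, c ∈ V⁻¹ * V → c = 1 := by
  have hcl : IsClosed (Φ \ {1}) := (hfin.subset Set.diff_subset).isClosed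
  have h1 : (1 : K) ∈ (Φ \ {1})ᶜ := by simp
  obtain ⟨V₀, hV₀op, hV₀1, hV₀⟩ :=
    exists_open_nhds_one_mul_subset (hcl.isOpen_compl.mem_nhds h1)
  refine ⟨V₀ ∩ V₀⁻¹, hV₀op.inter (hV₀op.preimage continuous_inv),
    ⟨hV₀1, by simp [hV₀1]⟩, ?_⟩
  rintro c hc hcm
  rw [Set.mem_mul] at hcm
  obtain ⟨a, ha, b, hb, rfl⟩ := hcm
  have ha' : a ∈ V₀ := by
    rw [Set.mem_inv] at ha
    simpa using ha.2
  have := hV₀ (Set.mul_mem_mul ha' hb.1)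
  by_contra hne
  exact this ⟨hc, hne⟩

private theorem main_aux {A : Type u} [CommGroup A] [TopologicalSpace A] [IsTopologicalGroup A]
    {F : Type u} [Group F] [Finite F] [TopologicalSpace F] [DiscreteTopology F]
    (hA : IsTotallyMinimalGroup A) (H : Subgroup (A × F)) (hH : IsClosed (H : Set (A × F)))
    (K : Type u) [Group K] [TopologicalSpace K] [IsTopologicalGroup K] [T2Space K]
    (f : ↥H →* K) (hfc : Continuous f) (hfs : Function.Surjective f) : IsOpenMap f := by
  classical
  haveI : IsTopologicalGroup F :=
    { continuous_mul := continuous_of_discreteTopology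
      continuous_inv := continuous_of_discreteTopology }
  set ψ : ↥H →* A := (MonoidHom.fst A F).comp H.subtype with hψ
  have hψc : Continuous ψ := continuous_fst.comp continuous_subtype_val
  have hψval : ∀ h : ↥H, ψ h = (h : A × F).1 := fun h => rfl
  set Φ : Subgroup K := ψ.ker.map f with hΦ
  haveI hΦn : Φ.Normal := (MonoidHom.normal_ker ψ).map f hfs
  have hΦfin : (Φ : Set K).Finite := by
    haveI : Finite ↥(ψ.ker) := by
      apply Finite.of_injective (fun x : ↥(ψ.ker) => ((x : ↥H) : A × F).2)
      rintro ⟨x, hx⟩ ⟨y, hy⟩ hxy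
      have hx1 : ((x : A × F)).1 = 1 := hx
      have hy1 : ((y : A × F)).1 = 1 := hy
      apply Subtype.ext; apply Subtype.ext
      exact Prod.ext_iff.mpr ⟨by rw [hx1, hy1], hxy⟩
    have h1 : ((ψ.ker : Subgroup ↥H) : Set ↥H).Finite := Set.toFinite _
    have h2 : (Φ : Set K) = f '' (ψ.ker : Set ↥H) := by rw [hΦ, Subgroup.coe_map]
    rw [h2]; exact h1.image f
  haveI hΦcl : IsClosed (Φ : Set K) := hΦfin.isClosed
  have hκc : Continuous (QuotientGroup.mk' Φ) := by
    rw [QuotientGroup.coe_mk']; exact QuotientGroup.continuous_mk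
  set g : ↥H →* K ⧸ Φ := (QuotientGroup.mk' Φ).comp f with hg
  have hgc : Continuous g := hκc.comp hfc
  have hgs : Function.Surjective g := (QuotientGroup.mk'_surjective Φ).comp hfs
  have hker : ∀ h : ↥H, ψ h = 1 → g h = 1 := by
    intro h hh
    have hmem : f h ∈ Φ := by
      rw [hΦ]
      exact Subgroup.mem_map.mpr ⟨h, MonoidHom.mem_ker.mpr hh, rfl⟩
    show QuotientGroup.mk' Φ (f h) = 1
    rw [QuotientGroup.mk'_apply, QuotientGroup.eq_one_iff]
    exact hmem
  have hcomm : ∀ y z : K ⧸ Φ, y * z = z * y := by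
    intro y z
    obtain ⟨a, rfl⟩ := hgs y
    obtain ⟨b, rfl⟩ := hgs z
    rw [← map_mul, ← map_mul]
    have h1 : ψ ((a * b) * (b * a)⁻¹) = 1 := by
      rw [map_mul, map_inv, map_mul, map_mul, mul_comm (ψ a) (ψ b), mul_inv_cancel]
    have h2 : g ((a * b) * (b * a)⁻¹) = 1 := hker _ h1
    rw [map_mul, map_inv, mul_inv_eq_one] at h2
    exact h2
  set θ : ↥H →* A × (K ⧸ Φ) :=
    ψ.prod (MonoidHom.mk' (fun h => (g h)⁻¹)
      (fun a b => by
        show (g (a * b))⁻¹ = (g a)⁻¹ * (g b)⁻¹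
        rw [map_mul, mul_inv_rev, hcomm])) with hθ
  have hθval : ∀ h : ↥H, θ h = (ψ h, (g h)⁻¹) := fun h => rfl
  set Δ : Subgroup (A × (K ⧸ Φ)) := θ.range with hΔ
  haveI hΔn : Δ.Normal := by
    constructor
    intro n hn gg
    have heq : gg * n * gg⁻¹ = n := by
      have h1 : gg.1 * n.1 * gg.1⁻¹ = n.1 := by rw [mul_comm gg.1 n.1, mul_inv_cancel_right]
      have h2 : gg.2 * n.2 * gg.2⁻¹ = n.2 := by rw [hcomm gg.2 n.2, mul_inv_cancel_right]
      exact Prod.ext_iff.mpr ⟨h1, h2⟩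
    rw [heq]; exact hn
  haveI hΔcl : IsClosed (Δ : Set (A × (K ⧸ Φ))) := by
    have hEq : (Δ : Set (A × (K ⧸ Φ))) =
        ⋃ φ : F, {p : A × (K ⧸ Φ) |
          ∃ h : p.1 ∈ {a : A | (a, φ) ∈ H},
            (fun a : {a : A // a ∈ {a : A | (a, φ) ∈ H}} =>
              (g ⟨((a : A), φ), a.2⟩)⁻¹) ⟨p.1, h⟩ = p.2} := by
      ext p
      simp only [SetLike.mem_coe, Set.mem_iUnion, Set.mem_setOf_eq]
      constructor
      · rintro hp
        obtain ⟨h, rfl⟩ := MonoidHom.mem_range.mp hp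
        exact ⟨(h : A × F).2, h.2, rfl⟩
      · rintro ⟨φ, hm, he⟩
        refine MonoidHom.mem_range.mpr ⟨⟨(p.1, φ), hm⟩, ?_⟩
        rw [hθval]
        exact Prod.ext_iff.mpr ⟨rfl, he⟩
    rw [hEq]
    apply isClosed_iUnion_of_finite
    intro φ
    have hS : IsClosed {a : A | (a, φ) ∈ H} :=
      hH.preimage (continuous_id.prodMk continuous_const)
    have hc : Continuous (fun a : {a : A // a ∈ {a : A | (a, φ) ∈ H}} =>
        (g ⟨((a : A), φ), a.2⟩)⁻¹) := by
      refine Continuous.inv (f := fun a : {a : A // a ∈ {a : A | (a, φ) ∈ H}} =>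
        g ⟨((a : A), φ), a.2⟩) ?_
      apply hgc.comp
      apply Continuous.subtype_mk
      exact continuous_subtype_val.prodMk continuous_const
    exact closed_graph_aux hS hc
  set iA : A →* (A × (K ⧸ Φ)) ⧸ Δ :=
    (QuotientGroup.mk' Δ).comp (MonoidHom.inl A (K ⧸ Φ)) with hiA
  have hiAval : ∀ a : A, iA a = QuotientGroup.mk ((a, 1) : A × (K ⧸ Φ)) := fun a => rfl
  have hiAc : Continuous iA := by
    have h1 : Continuous fun a : A =>
        ((QuotientGroup.mk ((a, (1 : K ⧸ Φ)) : A × (K ⧸ Φ))) : (A × (K ⧸ Φ)) ⧸ Δ) :=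
      (QuotientGroup.continuous_mk (N := Δ)).comp (continuous_id.prodMk continuous_const)
    exact h1
  have hiAs : Function.Surjective iA := by
    rintro e
    obtain ⟨⟨a, y⟩, rfl⟩ := QuotientGroup.mk_surjective e
    obtain ⟨h, hh⟩ := hgs y⁻¹
    refine ⟨a * (ψ h)⁻¹, ?_⟩
    rw [hiAval]
    rw [QuotientGroup.eq]
    refine MonoidHom.mem_range.mpr ⟨h, ?_⟩
    rw [hθval]
    refine Prod.ext_iff.mpr ⟨?_, ?_⟩
    · show ψ h = (a * (ψ h)⁻¹)⁻¹ * a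
      rw [mul_inv_rev, inv_inv, mul_assoc, inv_mul_cancel, mul_one]
    · show (g h)⁻¹ = 1⁻¹ * y
      rw [hh, inv_inv, inv_one, one_mul]
  have hiAopen : IsOpenMap iA := hA _ iA hiAc hiAs
  have dagger : ∀ O : Set A, IsOpen O → (1 : A) ∈ O →
      IsOpen {y : K ⧸ Φ | ∃ h : ↥H, ψ h ∈ O ∧ g h = y} ∧
        (1 : K ⧸ Φ) ∈ {y : K ⧸ Φ | ∃ h : ↥H, ψ h ∈ O ∧ g h = y} := by
    intro O hO hO1
    have hsetEq : ((fun y : K ⧸ Φ => (((1 : A), y) : A × (K ⧸ Φ))) ⁻¹'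
        (QuotientGroup.mk ⁻¹' (iA '' O))) = {y : K ⧸ Φ | ∃ h : ↥H, ψ h ∈ O ∧ g h = y} := by
      ext y
      simp only [Set.mem_preimage, Set.mem_image, Set.mem_setOf_eq]
      constructor
      · rintro ⟨a, haO, hae⟩
        rw [hiAval, QuotientGroup.eq] at hae
        obtain ⟨h, hh⟩ := MonoidHom.mem_range.mp hae
        rw [hθval] at hh
        have h1 : ψ h = ((a, (1 : K ⧸ Φ))⁻¹ * ((1 : A), y)).1 := congrArg Prod.fst hh
        have h2 : (g h)⁻¹ = ((a, (1 : K ⧸ Φ))⁻¹ * ((1 : A), y)).2 := congrArg Prod.snd hh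
        simp only [Prod.fst_mul, Prod.fst_inv, Prod.snd_mul, Prod.snd_inv, mul_one,
          inv_one, one_mul] at h1 h2
        refine ⟨h⁻¹, ?_, ?_⟩
        · rw [map_inv, h1, inv_inv]; exact haO
        · rw [map_inv, h2]
      · rintro ⟨h, hhO, rfl⟩
        refine ⟨ψ h, hhO, ?_⟩
        rw [hiAval, QuotientGroup.eq]
        refine MonoidHom.mem_range.mpr ⟨h⁻¹, ?_⟩
        rw [hθval]
        refine Prod.ext_iff.mpr ⟨?_, ?_⟩
        · show ψ h⁻¹ = ((ψ h, (1 : K ⧸ Φ))⁻¹ * ((1 : A), g h)).1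
          simp
        · show (g h⁻¹)⁻¹ = ((ψ h, (1 : K ⧸ Φ))⁻¹ * ((1 : A), g h)).2
          simp
    constructor
    · rw [← hsetEq]
      exact ((hiAopen O hO).preimage QuotientGroup.continuous_mk).preimage
        (continuous_const.prodMk continuous_id)
    · exact ⟨1, by simpa using hO1, map_one g⟩
  -- openness of f via the criterion
  apply open_criterion f
  intro U hU hU1
  obtain ⟨V, hVop, hV1, hVsep⟩ := sep_finite (K := K) hΦfin
  have hPreOpen : IsOpen ((fun a : {a : A // (a, (1 : F)) ∈ H} =>
      (⟨((a : A), 1), a.2⟩ : ↥H)) ⁻¹' (U ∩ f ⁻¹' V)) := by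
    apply (Continuous.subtype_mk (continuous_subtype_val.prodMk continuous_const) _).isOpen_preimage
    exact hU.inter (hVop.preimage hfc)
  obtain ⟨O₂, hO₂op, hO₂eq⟩ := isOpen_induced_iff.mp hPreOpen
  have hone : (((1 : A), (1 : F)) : A × F) ∈ H := H.one_mem
  have hO₂1 : (1 : A) ∈ O₂ := by
    have h1 : (⟨1, hone⟩ : {a : A // (a, (1 : F)) ∈ H}) ∈
        (Subtype.val ⁻¹' O₂ : Set {a : A // (a, (1 : F)) ∈ H}) := by
      rw [hO₂eq]
      show (⟨((1 : A), (1 : F)), hone⟩ : ↥H) ∈ U ∩ f ⁻¹' V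
      have he : (⟨((1 : A), (1 : F)), hone⟩ : ↥H) = 1 := rfl
      rw [he]
      exact ⟨hU1, by rw [Set.mem_preimage, map_one]; exact hV1⟩
    exact h1
  set Bad : Set A :=
    ⋃ φ : F, if ((1 : A), φ) ∈ H then (∅ : Set A) else {a : A | (a, φ) ∈ H} with hBad
  have hBadcl : IsClosed Bad := by
    apply isClosed_iUnion_of_finite
    intro φ
    by_cases hc : (((1 : A), φ) : A × F) ∈ H
    · rw [if_pos hc]; exact isClosed_empty
    · rw [if_neg hc]; exact hH.preimage (continuous_id.prodMk continuous_const)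
  have hBad1 : (1 : A) ∉ Bad := by
    rw [hBad]
    intro hm
    obtain ⟨φ, hφ⟩ := Set.mem_iUnion.mp hm
    by_cases hc : (((1 : A), φ) : A × F) ∈ H
    · rw [if_pos hc] at hφ; exact hφ
    · rw [if_neg hc] at hφ; exact hc hφ
  obtain ⟨hYopen, hY1⟩ := dagger (O₂ ∩ Badᶜ) (hO₂op.inter hBadcl.isOpen_compl) ⟨hO₂1, hBad1⟩
  have hsub : V ∩ (QuotientGroup.mk' Φ) ⁻¹'
      {y : K ⧸ Φ | ∃ h : ↥H, ψ h ∈ O₂ ∩ Badᶜ ∧ g h = y} ⊆ f '' U := by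
    rintro k ⟨hkV, hkY⟩
    rw [Set.mem_preimage] at hkY
    obtain ⟨h, hhO, hgk⟩ := hkY
    obtain ⟨hhO₂, hhBad⟩ := hhO
    have hφH : (((1 : A), (h : A × F).2) : A × F) ∈ H := by
      by_contra hc
      apply hhBad
      rw [hBad]
      refine Set.mem_iUnion.mpr ⟨(h : A × F).2, ?_⟩
      rw [if_neg hc]
      show ((ψ h, (h : A × F).2) : A × F) ∈ H
      rw [hψval]
      exact h.2
    have hb : (((h : A × F).1, (1 : F)) : A × F) ∈ H := by
      have hmm := H.mul_mem h.2 (H.inv_mem hφH)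
      have he : (h : A × F) * (((1 : A), (h : A × F).2) : A × F)⁻¹ =
          (((h : A × F).1, (1 : F)) : A × F) := by
        refine Prod.ext_iff.mpr ⟨?_, ?_⟩ <;> simp
      rwa [he] at hmm
    have hψO₂ : (h : A × F).1 ∈ O₂ := hhO₂
    have hPrem : (⟨(h : A × F).1, hb⟩ : {a : A // (a, (1 : F)) ∈ H}) ∈
        (fun a : {a : A // (a, (1 : F)) ∈ H} =>
          (⟨((a : A), 1), a.2⟩ : ↥H)) ⁻¹' (U ∩ f ⁻¹' V) := by
      rw [← hO₂eq]
      exact hψO₂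
    obtain ⟨hh₀U, hh₀V⟩ := hPrem
    have hgh : g h = g (⟨((h : A × F).1, 1), hb⟩ : ↥H) := by
      have h1 : ψ ((⟨((h : A × F).1, 1), hb⟩ : ↥H)⁻¹ * h) = 1 := by
        rw [map_mul, map_inv, hψval, hψval]
        show ((((h : A × F).1, (1 : F)) : A × F).1)⁻¹ * (h : A × F).1 = 1
        exact inv_mul_cancel _
      have h2 := hker _ h1
      rw [map_mul, map_inv, inv_mul_eq_one] at h2
      exact h2.symm
    have hkf : k⁻¹ * f (⟨((h : A × F).1, 1), hb⟩ : ↥H) ∈ Φ := by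
      have heq : ((k : K) : K ⧸ Φ) = ((f (⟨((h : A × F).1, 1), hb⟩ : ↥H) : K) : K ⧸ Φ) := by
        rw [← QuotientGroup.mk'_apply Φ k, ← QuotientGroup.mk'_apply Φ
          (f (⟨((h : A × F).1, 1), hb⟩ : ↥H)), ← hgk, hgh]
        rfl
      exact QuotientGroup.eq.mp heq
    have hmul : k⁻¹ * f (⟨((h : A × F).1, 1), hb⟩ : ↥H) ∈ V⁻¹ * V :=
      Set.mul_mem_mul (Set.inv_mem_inv.mpr hkV) hh₀V
    have h1 : k⁻¹ * f (⟨((h : A × F).1, 1), hb⟩ : ↥H) = 1 := hVsep _ hkf hmul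
    rw [inv_mul_eq_one] at h1
    exact ⟨_, hh₀U, h1.symm⟩
  have hmemnhds : V ∩ (QuotientGroup.mk' Φ) ⁻¹'
      {y : K ⧸ Φ | ∃ h : ↥H, ψ h ∈ O₂ ∩ Badᶜ ∧ g h = y} ∈ 𝓝 (1 : K) := by
    apply Filter.inter_mem (hVop.mem_nhds hV1)
    have hm1 : (QuotientGroup.mk' Φ) (1 : K) ∈
        {y : K ⧸ Φ | ∃ h : ↥H, ψ h ∈ O₂ ∩ Badᶜ ∧ g h = y} := by
      rw [map_one]; exact hY1
    exact (hYopen.preimage hκc).mem_nhds hm1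
  exact Filter.mem_of_superset hmemnhds hsub

/-- If `A` is a totally minimal abelian topological group and `F` a finite
discrete group, then `A × F` is c-totally minimal. -/
theorem prod_totallyMinimal_abelian_finite_cTotallyMinimal {A : Type u} [CommGroup A]
    [TopologicalSpace A] [IsTopologicalGroup A] [T2Space A] {F : Type u} [Group F] [Finite F]
    [TopologicalSpace F] [DiscreteTopology F] (hA : IsTotallyMinimalGroup A) :
    IsCTotallyMinimalGroup (A × F) := by
  intro H hH
  intro K _ _ _ _ f hfc hfs
  exact main_aux hA H hH K f hfc hfs
end

section
/- Let G be a topological group and N a compact open normal subgroup of G such that the quotient group G/N is hereditarily minimal (i.e., every subgroup of G/N, with its induced topology, is minimal). Then G is c-minimal. -/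
open Filter Topology
open scoped Manifold

universe u

/-- A topological group is *hereditarily minimal* if every subgroup (with the subspace
topology) is minimal. -/
def HereditarilyMinimal (G : Type u) [Group G] [TopologicalSpace G] : Prop :=
  ∀ H : Subgroup G, IsMinimalGroup H

/-- If `t1 ≤ t2`, `(X, t1)` is compact and `(X, t2)` is Hausdorff, the topologies agree. -/
private lemma topEq_of_le_compact {X : Type u} {t1 t2 : TopologicalSpace X}
    (h : t1 ≤ t2) (hc : @CompactSpace X t1) (h2 : @T2Space X t2) : t1 = t2 := by
  refine le_antisymm h (TopologicalSpace.le_def.mpr fun s hs => ?_)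
  have hcp2 : @IsCompact X t2 sᶜ := by
    have h1 : @IsCompact X t1 sᶜ := by
      letI := t1
      haveI := hc
      exact (isClosed_compl_iff.mpr hs).isCompact
    have h2' := @IsCompact.image X X t1 t2 sᶜ id h1 (continuous_id_of_le h)
    simpa using h2'
  letI := t2
  haveI := h2
  rw [show s = (sᶜ)ᶜ by simp]
  exact (hcp2.isClosed).isOpen_compl

private lemma induced_bot' {α β : Type u} {f : α → β} (hf : Function.Injective f) :
    TopologicalSpace.induced f ⊥ = ⊥ := by
  letI : TopologicalSpace β := ⊥
  haveI : DiscreteTopology β := ⟨rfl⟩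
  letI tα : TopologicalSpace α := TopologicalSpace.induced f ⊥
  haveI : DiscreteTopology α :=
    (Topology.IsEmbedding.mk ⟨rfl⟩ hf).discreteTopology
  exact DiscreteTopology.eq_bot

/-- If a Hausdorff topological group `H` admits a surjective homomorphism `f` onto a group
`B` such that `ker f` is compact and `(B, ⊥)` is minimal, then `ker f` is open. -/
private lemma ker_isOpen {H B : Type u} [Group H] [TopologicalSpace H] [IsTopologicalGroup H]
    [T2Space H] [Group B] (f : H →* B) (hf : Function.Surjective f)
    (hK : IsCompact (f.ker : Set H)) (hmin : @IsMinimalGroup B _ ⊥) :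
    IsOpen (f.ker : Set H) := by
  haveI : IsClosed (f.ker : Set H) := hK.isClosed
  haveI : T2Space (H ⧸ f.ker) := inferInstance
  let e : H ⧸ f.ker ≃* B := QuotientGroup.quotientKerEquivOfSurjective f hf
  let tQ : TopologicalSpace (H ⧸ f.ker) := inferInstance
  let tB : TopologicalSpace B := tQ.induced ⇑e.symm
  have tgB : @IsTopologicalGroup B tB _ := topologicalGroup_induced (e.symm : B ≃* H ⧸ f.ker)
  have t2B : @T2Space B tB :=
    @Topology.IsEmbedding.t2Space B (H ⧸ f.ker) tB tQ inferInstance ⇑e.symm ⟨⟨rfl⟩, e.symm.injective⟩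
  have hBbot : tB = ⊥ := hmin tB bot_le tgB t2B
  have h1 : TopologicalSpace.induced ⇑e tB = tQ := by
    show TopologicalSpace.induced ⇑e (tQ.induced ⇑e.symm) = tQ
    rw [induced_compose]
    have : (⇑e.symm ∘ ⇑e) = id := funext fun x => e.symm_apply_apply x
    rw [this]
    exact induced_id
  have h2 : tQ = ⊥ := by
    rw [← h1, hBbot, induced_bot' e.injective]
  haveI : DiscreteTopology (H ⧸ f.ker) := ⟨h2⟩
  have hset : (f.ker : Set H) = QuotientGroup.mk ⁻¹' ({1} : Set (H ⧸ f.ker)) := by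
    ext x
    simp [QuotientGroup.eq_one_iff]
  rw [hset]
  exact (isOpen_discrete _).preimage QuotientGroup.continuous_mk

/-- If `G` has a compact open normal subgroup `N` with `G/N` hereditarily
minimal, then `G` is c-minimal. -/
theorem cminimal_of_compact_open_normal_hereditarilyMinimal_quotient {G : Type u} [Group G]
    [TopologicalSpace G] [IsTopologicalGroup G] [T2Space G] (N : Subgroup G) [N.Normal]
    (hNcomp : IsCompact (N : Set G)) (hNopen : IsOpen (N : Set G))
    (hq : HereditarilyMinimal (G ⧸ N)) : IsCMinimalGroup G := by
  intro H hHcl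
  intro t' hle htg ht2
  letI tH : TopologicalSpace ↥H := instTopologicalSpaceSubtype
  set K : Subgroup ↥H := N.subgroupOf H with hKdef
  set S : Set ↥H := (K : Set ↥H) with hSdef
  have h1S : (1 : ↥H) ∈ S := K.one_mem
  -- K is compact in the subspace topology
  have hKcomp : @IsCompact ↥H tH S := by
    rw [IsEmbedding.subtypeVal.isCompact_iff]
    have : (Subtype.val : ↥H → G) '' S = (H : Set G) ∩ (N : Set G) :=
      Subtype.image_preimage_coe _ _
    rw [this]
    exact hNcomp.inter_left hHcl
  -- K is open in the subspace topology
  have hKopenT : IsOpen[tH] S := Subgroup.subgroupOf_isOpen H N hNopen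
  -- Step B : subspace topologies on S from tH and t' agree
  have hind : (@instTopologicalSpaceSubtype ↥H (· ∈ S) tH)
      = (@instTopologicalSpaceSubtype ↥H (· ∈ S) t') := by
    refine topEq_of_le_compact (induced_mono hle) ?_ ?_
    · exact isCompact_iff_compactSpace.mp hKcomp
    · exact @T2Space.of_injective_continuous ↥S ↥H (@instTopologicalSpaceSubtype ↥H (· ∈ S) t')
        t' ht2 (Subtype.val : ↥S → ↥H) Subtype.val_injective continuous_induced_dom
  have hnw : @nhdsWithin ↥H t' 1 S = @nhdsWithin ↥H tH 1 S := by
    rw [@nhdsWithin_eq_map_subtype_coe ↥H t' S 1 h1S,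
      @nhdsWithin_eq_map_subtype_coe ↥H tH S 1 h1S, hind]
  -- K is compact in t'
  have hKc' : @IsCompact ↥H t' S := by
    have h2' := @IsCompact.image ↥H ↥H tH t' S id hKcomp (continuous_id_of_le hle)
    simpa using h2'
  -- Step C : K is open in t'
  let f : ↥H →* G ⧸ N := (QuotientGroup.mk' N).comp H.subtype
  have hfker : f.ker = K := by
    rw [← MonoidHom.comap_ker, QuotientGroup.ker_mk']
    rfl
  have hf'ker : f.rangeRestrict.ker = K := by
    rw [MonoidHom.ker_rangeRestrict, hfker]
  haveI : DiscreteTopology (G ⧸ N) := QuotientGroup.discreteTopology hNopen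
  have hmin : @IsMinimalGroup ↥f.range _ ⊥ := by
    have hb : (instTopologicalSpaceSubtype : TopologicalSpace ↥f.range) = ⊥ :=
      DiscreteTopology.eq_bot
    rw [← hb]
    exact hq f.range
  have hKopen' : IsOpen[t'] S := by
    have := @ker_isOpen ↥H ↥f.range _ t' htg ht2 _ f.rangeRestrict
      f.rangeRestrict_surjective (by rw [hf'ker]; exact hKc') hmin
    rwa [hf'ker] at this
  -- conclude
  have hn : @nhds ↥H t' 1 = @nhds ↥H tH 1 := by
    calc @nhds ↥H t' 1 = @nhdsWithin ↥H t' 1 S :=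
          (@IsOpen.nhdsWithin_eq ↥H t' 1 S hKopen' h1S).symm
      _ = @nhdsWithin ↥H tH 1 S := hnw
      _ = @nhds ↥H tH 1 := @IsOpen.nhdsWithin_eq ↥H tH 1 S hKopenT h1S
  exact IsTopologicalGroup.ext htg inferInstance hn
end

section
/- Let G be a topological group and N a compact open normal subgroup of G such that the quotient group G/N is hereditarily totally minimal (i.e., every subgroup of G/N, with its induced topology, is totally minimal). Then G is c-totally minimal. -/
open Filter Topology
open scoped Manifold
open scoped Pointwise

universe u

/-- A topological group is *hereditarily totally minimal* if every subgroup (with the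
subspace topology) is totally minimal. -/
def HereditarilyTotallyMinimal (G : Type u) [Group G] [TopologicalSpace G] : Prop :=
  ∀ H : Subgroup G, IsTotallyMinimalGroup H

/-- If `G` has a compact open normal subgroup `N` with `G/N` hereditarily
totally minimal, then `G` is c-totally minimal. -/
theorem cTotallyMinimal_of_compact_open_normal_hereditarilyTotallyMinimal_quotient
    {G : Type u} [Group G] [TopologicalSpace G] [IsTopologicalGroup G] [T2Space G]
    (N : Subgroup G) [N.Normal] (hNcomp : IsCompact (N : Set G))
    (hNopen : IsOpen (N : Set G)) (hq : HereditarilyTotallyMinimal (G ⧸ N)) :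
    IsCTotallyMinimalGroup G := by
  intro H hHclosed K _ _ _ _ f hfc hfs
  -- the projection from H to G ⧸ N
  set ρ : ↥H →* G ⧸ N := (QuotientGroup.mk' N).comp H.subtype with hρ
  -- the kernel of ρ, a compact open normal subgroup of H
  have hker_set : (ρ.ker : Set ↥H) = Subtype.val ⁻¹' (N : Set G) := by
    ext x
    simp [hρ, MonoidHom.mem_ker, QuotientGroup.eq_one_iff]
  have hval : Topology.IsClosedEmbedding ((↑) : ↥H → G) :=
    Topology.IsClosedEmbedding.subtypeVal hHclosed
  have hCcomp : IsCompact (ρ.ker : Set ↥H) := by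
    rw [hker_set]; exact hval.isCompact_preimage hNcomp
  -- image M of the kernel under f
  set M : Subgroup K := ρ.ker.map f with hM
  haveI : M.Normal := Subgroup.Normal.map inferInstance f hfs
  have hMset : (M : Set K) = f '' (ρ.ker : Set ↥H) := by
    simp [hM, Subgroup.coe_map]
  have hMcomp : IsCompact (M : Set K) := by
    rw [hMset]; exact hCcomp.image hfc
  haveI hMclosed : IsClosed (M : Set K) := hMcomp.isClosed
  -- the quotient K ⧸ M is a Hausdorff topological group
  haveI : T3Space (K ⧸ M) := QuotientGroup.instT3Space M
  -- G ⧸ N is discrete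
  haveI : DiscreteTopology (G ⧸ N) := by
    apply discreteTopology_of_isOpen_singleton_one
    have : ({(1 : G ⧸ N)} : Set (G ⧸ N)) = QuotientGroup.mk '' (N : Set G) := by
      ext x
      simp only [Set.mem_singleton_iff, Set.mem_image]
      constructor
      · rintro rfl; exact ⟨1, N.one_mem, rfl⟩
      · rintro ⟨g, hg, rfl⟩
        exact (QuotientGroup.eq_one_iff g).2 hg
    rw [this]
    exact QuotientGroup.isOpenMap_coe (N := N) _ hNopen
  -- the map from H ⧸ ker ρ to K ⧸ M
  have hlift_cond : ∀ x ∈ ρ.ker, ((QuotientGroup.mk' M).comp f) x = 1 := by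
    intro x hx
    simp only [MonoidHom.comp_apply, QuotientGroup.mk'_apply]
    rw [QuotientGroup.eq_one_iff]
    exact ⟨x, hx, rfl⟩
  set lift : (↥H ⧸ ρ.ker) →* K ⧸ M :=
    QuotientGroup.lift ρ.ker ((QuotientGroup.mk' M).comp f) hlift_cond with hlift
  set e : (↥H ⧸ ρ.ker) ≃* ↥ρ.range := QuotientGroup.quotientKerEquivRange ρ with he
  set φ : ↥ρ.range →* K ⧸ M := lift.comp e.symm.toMonoidHom with hφ
  have hφsurj : Function.Surjective φ := by
    have h1 : Function.Surjective lift := by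
      intro y
      obtain ⟨k, rfl⟩ := QuotientGroup.mk'_surjective M y
      obtain ⟨x, rfl⟩ := hfs k
      exact ⟨QuotientGroup.mk x, rfl⟩
    exact h1.comp e.symm.surjective
  have hφcont : Continuous φ := continuous_of_discreteTopology
  have hφopen : IsOpenMap φ := hq ρ.range (K ⧸ M) φ hφcont hφsurj
  -- hence K ⧸ M is discrete and M is open in K
  have h1open : IsOpen ({(1 : K ⧸ M)} : Set (K ⧸ M)) := by
    have := hφopen _ (isOpen_discrete ({1} : Set ↥ρ.range))
    rwa [Set.image_singleton, map_one] at this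
  have hMopen : IsOpen (M : Set K) := by
    have : (M : Set K) = QuotientGroup.mk ⁻¹' ({(1 : K ⧸ M)} : Set (K ⧸ M)) := by
      ext x
      simp [QuotientGroup.eq_one_iff]
    rw [this]
    exact h1open.preimage continuous_quot_mk
  -- key step: f maps neighborhoods of 1 to neighborhoods of 1
  have key : ∀ V : Set ↥H, IsOpen V → (1 : ↥H) ∈ V → f '' V ∈ 𝓝 (1 : K) := by
    intro V hV h1V
    classical
    set F : Set ↥H := (ρ.ker : Set ↥H) ∩ (V * (f.ker : Set ↥H))ᶜ with hF
    have hFcomp : IsCompact F := hCcomp.inter_right (hV.mul_right).isClosed_compl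
    have hfFclosed : IsClosed (f '' F) := (hFcomp.image hfc).isClosed
    have hsub : (M : Set K) \ f '' F ⊆ f '' V := by
      rintro m ⟨hmM, hmF⟩
      rw [hMset] at hmM
      obtain ⟨c, hcK, rfl⟩ := hmM
      have hcF : c ∉ F := fun h => hmF ⟨c, h, rfl⟩
      have hc : c ∈ V * (f.ker : Set ↥H) := by
        by_contra h
        exact hcF ⟨hcK, h⟩
      obtain ⟨v, hv, k, hk, rfl⟩ := hc
      have : f k = 1 := hk
      exact ⟨v, hv, by rw [map_mul, this, mul_one]⟩
    have h1mem : (1 : K) ∈ (M : Set K) \ f '' F := by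
      constructor
      · exact M.one_mem
      · rintro ⟨c, hcF, hc1⟩
        have : c ∈ V * (f.ker : Set ↥H) := ⟨1, h1V, c, hc1, one_mul c⟩
        exact hcF.2 this
    exact Filter.mem_of_superset
      ((hMopen.sdiff hfFclosed).mem_nhds h1mem) hsub
  -- conclude that f is an open map
  intro U hU
  rw [isOpen_iff_mem_nhds]
  rintro _ ⟨h, hhU, rfl⟩
  have hV : IsOpen ((fun x => h * x) ⁻¹' U) :=
    hU.preimage (continuous_const.mul continuous_id)
  have h1V : (1 : ↥H) ∈ (fun x => h * x) ⁻¹' U := by simpa using hhU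
  have := key _ hV h1V
  obtain ⟨W, hWsub, hWopen, h1W⟩ := mem_nhds_iff.1 this
  refine mem_nhds_iff.2 ⟨(fun y => f h * y) '' W, ?_, ?_, ?_⟩
  · rintro _ ⟨w, hw, rfl⟩
    obtain ⟨v, hv, rfl⟩ := hWsub hw
    exact ⟨h * v, hv, by simp [map_mul]⟩
  · exact (Homeomorph.mulLeft (f h)).isOpenMap W hWopen
  · exact ⟨1, h1W, by simp⟩
end

section
/- If G is a c-totally minimal topological group and N is a closed normal subgroup of G, then the quotient group G/N (with the quotient topology) is c-totally minimal. -/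
open Filter Topology
open scoped Manifold

universe u

/-- Quotients of c-totally minimal groups by closed normal subgroups are
c-totally minimal. -/
theorem quotient_cTotallyMinimal {G : Type u} [Group G] [TopologicalSpace G]
    [IsTopologicalGroup G] [T2Space G] (hctm : IsCTotallyMinimalGroup G) (N : Subgroup G)
    [N.Normal] (hN : IsClosed (N : Set G)) : IsCTotallyMinimalGroup (G ⧸ N) := by
  intro H' hH'
  have hπc : Continuous (QuotientGroup.mk' N) := continuous_quot_mk
  set H : Subgroup G := H'.comap (QuotientGroup.mk' N) with hHdef
  have hHclosed : IsClosed (H : Set G) := hH'.preimage hπc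
  have htm := hctm H hHclosed
  intro K _ _ _ _ f hf hfs
  let p : ↥H →* ↥H' :=
    { toFun := fun g => ⟨QuotientGroup.mk' N g.1, g.2⟩
      map_one' := by ext; simp
      map_mul' := by intros; ext; simp }
  have hpc : Continuous p := Continuous.subtype_mk (hπc.comp continuous_subtype_val) _
  have hps : Function.Surjective p := by
    rintro ⟨x, hx⟩
    obtain ⟨g, rfl⟩ := QuotientGroup.mk'_surjective N x
    exact ⟨⟨g, hx⟩, rfl⟩
  have hopen := htm K (f.comp p) (hf.comp hpc) (hfs.comp hps)
  intro U hU
  have himg : f '' U = (f.comp p) '' (p ⁻¹' U) := by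
    ext y; constructor
    · rintro ⟨x, hx, rfl⟩
      obtain ⟨g, rfl⟩ := hps x
      exact ⟨g, hx, rfl⟩
    · rintro ⟨g, hg, rfl⟩
      exact ⟨p g, hg, rfl⟩
  rw [himg]
  exact hopen _ (hU.preimage hpc)
end

section
/- Let N be a compact open normal subgroup of a topological group G. Then G is c-totally minimal if and only if the quotient group G/N is hereditarily totally minimal (i.e., every subgroup of the discrete group G/N is totally minimal). -/
open Filter Topology
open scoped Manifold

universe u

section Aux

open scoped Pointwise

/-- A continuous surjective hom from a compact group onto a Hausdorff group is open. -/
theorem aux_compact_openMap {C K : Type*} [Group C] [TopologicalSpace C] [IsTopologicalGroup C]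
    [CompactSpace C] [Group K] [TopologicalSpace K] [T2Space K]
    (f : C →* K) (hc : Continuous f) (hs : Function.Surjective f) : IsOpenMap f := by
  have hcl : IsClosedMap f := fun s hs' => (hs'.isCompact.image hc).isClosed
  have hq := hcl.isQuotientMap hc hs
  intro V hV
  rw [← hq.isOpen_preimage]
  have : f ⁻¹' (f '' V) = V * (f.ker : Set C) := by
    ext x
    constructor
    · rintro ⟨v, hv, hfv⟩
      exact ⟨v, hv, v⁻¹ * x, by simp [MonoidHom.mem_ker, map_mul, hfv], by group⟩
    · rintro ⟨v, hv, k, hk, rfl⟩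
      exact ⟨v, hv, by simp [map_mul, show f k = 1 from hk]⟩
  rw [this]
  exact hV.mul_right

/-- Total minimality transports along group isomorphisms from a discrete group. -/
theorem aux_transport {G₁ G₂ : Type u} [Group G₁] [TopologicalSpace G₁] [DiscreteTopology G₁]
    [Group G₂] [TopologicalSpace G₂] (e : G₁ ≃* G₂) (h : IsTotallyMinimalGroup G₁) :
    IsTotallyMinimalGroup G₂ := by
  intro K _ _ _ _ f hfc hfs
  have h2 := h K (f.comp e.toMonoidHom) continuous_of_discreteTopology
    (hfs.comp e.surjective)
  intro V hV
  have hVeq : f '' V = (f.comp e.toMonoidHom) '' (⇑e.symm '' V) := by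
    rw [Set.image_image]
    simp
  rw [hVeq]
  exact h2 _ (isOpen_discrete _)

end Aux

/-- If `N` is a compact open normal subgroup of a topological group `G`,
then `G` is c-totally minimal iff `G/N` is hereditarily totally minimal. -/
theorem cTotallyMinimal_iff_quotient_hereditarilyTotallyMinimal {G : Type u} [Group G]
    [TopologicalSpace G] [IsTopologicalGroup G] [T2Space G] (N : Subgroup G) [N.Normal]
    (hNcomp : IsCompact (N : Set G)) (hNopen : IsOpen (N : Set G)) :
    IsCTotallyMinimalGroup G ↔ HereditarilyTotallyMinimal (G ⧸ N) := by
  constructor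
  · -- c-totally minimal ⇒ quotient hereditarily totally minimal
    intro hG Q
    set H : Subgroup G := Q.comap (QuotientGroup.mk' N) with hH
    have hNH : N ≤ H := by
      intro n hn
      have h1 : (QuotientGroup.mk' N) n = 1 := (QuotientGroup.eq_one_iff n).mpr hn
      exact Subgroup.mem_comap.mpr (h1 ▸ Q.one_mem)
    have hHopen : IsOpen (H : Set G) := Subgroup.isOpen_mono hNH hNopen
    have hHtm := hG H (Subgroup.isClosed_of_isOpen H hHopen)
    intro K _ _ _ _ f hfc hfs
    have hmem : ∀ x : ↥H, ((QuotientGroup.mk' N).comp H.subtype) x ∈ Q := fun x => x.2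
    set ψ : ↥H →* ↥Q := ((QuotientGroup.mk' N).comp H.subtype).codRestrict Q hmem with hψ
    have hψc : Continuous ψ :=
      Continuous.subtype_mk (QuotientGroup.continuous_mk.comp continuous_subtype_val) _
    have hψs : Function.Surjective ψ := by
      rintro ⟨q, hq⟩
      obtain ⟨g, rfl⟩ := QuotientGroup.mk_surjective q
      exact ⟨⟨g, hq⟩, rfl⟩
    have hopen := hHtm K (f.comp ψ) (hfc.comp hψc) (hfs.comp hψs)
    intro V hV
    have hVeq : f '' V = (f.comp ψ) '' (ψ ⁻¹' V) := by
      ext x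
      constructor
      · rintro ⟨v, hv, rfl⟩
        obtain ⟨h, rfl⟩ := hψs v
        exact ⟨h, hv, rfl⟩
      · rintro ⟨h, hh, rfl⟩
        exact ⟨ψ h, hh, rfl⟩
    rw [hVeq]
    exact hopen _ (hV.preimage hψc)
  · -- quotient hereditarily totally minimal ⇒ c-totally minimal
    intro hQtm H hHcl
    intro K _ _ _ _ f hfc hfs
    haveI : DiscreteTopology (G ⧸ N) := QuotientGroup.discreteTopology (N := N) hNopen
    set φ : ↥H →* G ⧸ N := (QuotientGroup.mk' N).comp H.subtype with hφ
    have hker : (φ.ker : Set ↥H) = Subtype.val ⁻¹' (N : Set G) := by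
      ext x
      simp [hφ, MonoidHom.mem_ker, QuotientGroup.eq_one_iff]
    set U := φ.ker with hU
    have hUopen : IsOpen (U : Set ↥H) := by
      rw [hker]; exact hNopen.preimage continuous_subtype_val
    have hUcomp : IsCompact (U : Set ↥H) := by
      rw [IsEmbedding.subtypeVal.isCompact_iff, hker,
        Set.image_preimage_eq_inter_range, Subtype.range_coe_subtype]
      exact hNcomp.inter_right hHcl
    set L : Subgroup K := U.map f with hL
    haveI hLnormal : L.Normal := Subgroup.Normal.map inferInstance f hfs
    have hLcomp : IsCompact (L : Set K) := by
      rw [hL, Subgroup.coe_map]; exact hUcomp.image hfc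
    haveI hLcl : IsClosed (L : Set K) := hLcomp.isClosed
    set g : ↥H →* K ⧸ L := (QuotientGroup.mk' L).comp f with hg
    have hkerle : U ≤ g.ker := fun x hx =>
      (QuotientGroup.eq_one_iff (f x)).mpr (Subgroup.mem_map_of_mem f hx)
    set gbar := QuotientGroup.lift U g hkerle with hgbar
    have hgc : Continuous gbar := by
      rw [(QuotientGroup.isQuotientMap_mk U).continuous_iff]
      exact QuotientGroup.continuous_mk.comp hfc
    have hgs : Function.Surjective gbar := by
      intro y
      obtain ⟨k, rfl⟩ := QuotientGroup.mk_surjective y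
      obtain ⟨h, rfl⟩ := hfs k
      exact ⟨QuotientGroup.mk h, rfl⟩
    have htm : IsTotallyMinimalGroup (↥H ⧸ U) :=
      aux_transport (QuotientGroup.quotientKerEquivRange φ).symm (hQtm φ.range)
    haveI : DiscreteTopology (↥H ⧸ U) := QuotientGroup.discreteTopology (N := U) hUopen
    have hL1 := htm (K ⧸ L) gbar hgc hgs _ (isOpen_discrete ({1} : Set (↥H ⧸ U)))
    rw [Set.image_singleton, map_one] at hL1
    have hLopen : IsOpen (L : Set K) := by
      have hpre : (L : Set K) = (QuotientGroup.mk : K → K ⧸ L) ⁻¹' {1} := by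
        ext k
        simp [QuotientGroup.eq_one_iff]
      rw [hpre]
      exact hL1.preimage QuotientGroup.continuous_mk
    haveI : CompactSpace ↥U := isCompact_iff_compactSpace.mp hUcomp
    have hkey : ∀ W : Set ↥H, IsOpen W → W ⊆ (U : Set ↥H) → IsOpen (f '' W) := by
      intro W hW hWU
      have hg0c : Continuous (f.subgroupMap U) :=
        Continuous.subtype_mk (hfc.comp continuous_subtype_val) _
      have hg0o : IsOpenMap (f.subgroupMap U) :=
        aux_compact_openMap _ hg0c (f.subgroupMap_surjective U)
      have h1 : IsOpen ((Subtype.val : ↥U → ↥H) ⁻¹' W) := hW.preimage continuous_subtype_val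
      have h2 := hg0o _ h1
      have h3 := hLopen.isOpenEmbedding_subtypeVal.isOpenMap _ h2
      convert h3 using 1
      ext k
      constructor
      · rintro ⟨h, hh, rfl⟩
        exact ⟨f.subgroupMap U ⟨h, hWU hh⟩, ⟨⟨h, hWU hh⟩, hh, rfl⟩, rfl⟩
      · rintro ⟨l, ⟨u, hu, rfl⟩, rfl⟩
        exact ⟨u.1, hu, rfl⟩
    intro V hV
    rw [isOpen_iff_forall_mem_open]
    rintro x ⟨v, hv, rfl⟩
    set W : Set ↥H := (fun u => v * u) ⁻¹' V ∩ (U : Set ↥H) with hW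
    have hWopen : IsOpen W := (hV.preimage (continuous_const.mul continuous_id)).inter hUopen
    have hfW := hkey W hWopen Set.inter_subset_right
    refine ⟨(fun k => f v * k) '' (f '' W), ?_, ?_, ?_⟩
    · rintro _ ⟨_, ⟨w, ⟨hwv, _⟩, rfl⟩, rfl⟩
      exact ⟨v * w, hwv, by simp [map_mul]⟩
    · exact (isOpenMap_mul_left (f v)) _ hfW
    · exact ⟨f 1, ⟨1, ⟨by simpa using hv, U.one_mem⟩, rfl⟩, by simp⟩
end

section
/- Let G be a strongly compactly covered topological group, i.e., every element of G is contained in a compact open normal subgroup of G. If G is c-totally minimal, then G is compact. -/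
open Filter Topology
open scoped Manifold
open scoped Pointwise

universe u

lemma aux_cont_of_const {T : Type*} {X : Type*} [Group T] [TopologicalSpace T]
    [IsTopologicalGroup T] [TopologicalSpace X] (K : Subgroup T) (hK : IsOpen (K : Set T))
    (h : T → X) (hconst : ∀ t : T, ∀ k ∈ K, h (t * k) = h t) : Continuous h := by
  rw [continuous_def]
  intro s _
  have heq : h ⁻¹' s = ⋃ t ∈ h ⁻¹' s, t • (K : Set T) := by
    ext x
    constructor
    · intro hx
      refine Set.mem_biUnion hx ?_
      rw [Set.mem_smul_set_iff_inv_smul_mem]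
      simpa using K.one_mem
    · intro hx
      obtain ⟨t, ht, hx⟩ := Set.mem_iUnion₂.mp hx
      rw [Set.mem_smul_set_iff_inv_smul_mem] at hx
      have : x = t * (t⁻¹ * x) := by group
      have hhx : h x = h t := by rw [this]; exact hconst t _ hx
      simpa [Set.mem_preimage, hhx] using ht
  rw [heq]
  exact isOpen_biUnion fun t _ => hK.leftCoset t

lemma aux_extract {T : Type u} [Group T] [TopologicalSpace T] [IsTopologicalGroup T]
    (hT : IsTotallyMinimalGroup T) {ι : Type u} (D : ι → Type u)
    [∀ i, Group (D i)] [∀ i, TopologicalSpace (D i)] [∀ i, IsTopologicalGroup (D i)]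
    [∀ i, T2Space (D i)] (ψ : T →* ∀ i, D i) (hψ : Continuous ψ)
    (S : Subgroup T) (hS : IsOpen (S : Set T)) (hker : ∀ t, ψ t = 1 → t ∈ S) :
    ∃ (I : Finset ι) (V : ∀ i, Set (D i)),
      (∀ i ∈ I, IsOpen (V i) ∧ (1 : D i) ∈ V i) ∧
      ∀ t : T, (∀ i ∈ I, ψ t i ∈ V i) → t ∈ S := by
  set R := ψ.range with hR
  have hfc : Continuous ψ.rangeRestrict := hψ.subtype_mk _
  have hopen : IsOpenMap ψ.rangeRestrict :=
    hT ↥R ψ.rangeRestrict hfc ψ.rangeRestrict_surjective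
  have himg : IsOpen (ψ.rangeRestrict '' S) := hopen _ hS
  obtain ⟨U, hUopen, hUpre⟩ := isOpen_induced_iff.mp himg
  have h1U : (1 : ∀ i, D i) ∈ U := by
    have h1 : ψ.rangeRestrict 1 ∈ ψ.rangeRestrict '' (S : Set T) :=
      ⟨1, S.one_mem, rfl⟩
    rw [← hUpre] at h1
    simpa using h1
  obtain ⟨I, V, hV, hsub⟩ := isOpen_pi_iff.mp hUopen 1 h1U
  refine ⟨I, V, fun i hi => ⟨(hV i hi).1, (hV i hi).2⟩, ?_⟩
  intro t ht
  have hmem : ψ t ∈ (↑I : Set ι).pi V := by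
    rw [Set.mem_pi]
    intro i hi
    exact ht i (Finset.mem_coe.mp hi)
  have hU2 : ψ t ∈ U := hsub hmem
  have hft : ψ.rangeRestrict t ∈ ψ.rangeRestrict '' (S : Set T) := by
    rw [← hUpre]; exact hU2
  obtain ⟨s, hsS, hst⟩ := hft
  have hψeq : ψ s = ψ t := congrArg Subtype.val hst
  have h2 : ψ (s⁻¹ * t) = 1 := by
    rw [map_mul, map_inv, hψeq, inv_mul_cancel]
  have h3 : s⁻¹ * t ∈ S := hker _ h2
  have : t = s * (s⁻¹ * t) := by group
  rw [this]
  exact S.mul_mem hsS h3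

lemma aux_top {G : Type u} [Group G] [TopologicalSpace G] [IsTopologicalGroup G]
    (h : IsTotallyMinimalGroup ↥(⊤ : Subgroup G)) : IsTotallyMinimalGroup G := by
  intro H _ _ _ _ f hf hsurj
  have hcont_e : Continuous ((⊤ : Subgroup G).subtype) := continuous_subtype_val
  have hesurj : Function.Surjective ((⊤ : Subgroup G).subtype) := fun g => ⟨⟨g, trivial⟩, rfl⟩
  have hopen := h H (f.comp (⊤ : Subgroup G).subtype) (hf.comp hcont_e) (hsurj.comp hesurj)
  intro U hU
  have : f '' U = (f.comp (⊤ : Subgroup G).subtype) '' (((⊤ : Subgroup G).subtype) ⁻¹' U) := by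
    rw [MonoidHom.coe_comp, Set.image_comp, Set.image_preimage_eq U hesurj]
  rw [this]
  exact hopen _ (hU.preimage hcont_e)


/-- A strongly compactly covered c-totally minimal group is compact. -/
theorem stronglyCompactlyCovered_cTotallyMinimal_compact {G : Type u} [Group G]
    [TopologicalSpace G] [IsTopologicalGroup G] [T2Space G]
    (hscc : ∀ g : G, ∃ N : Subgroup G, N.Normal ∧ IsCompact (N : Set G) ∧
      IsOpen (N : Set G) ∧ g ∈ N)
    (hctm : IsCTotallyMinimalGroup G) : CompactSpace G := by
  classical
  obtain ⟨K, hKnorm, hKcomp, hKopen, -⟩ := hscc 1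
  haveI := hKnorm
  -- images of compact sets in G ⧸ K are finite
  have himg_fin : ∀ N : Subgroup G, IsCompact (N : Set G) →
      Set.Finite ((QuotientGroup.mk' K) '' (N : Set G)) := by
    intro N hNc
    have hcover : (N : Set G) ⊆ ⋃ n : N, (n : G) • (K : Set G) := by
      intro x hx
      refine Set.mem_iUnion.mpr ⟨⟨x, hx⟩, ?_⟩
      rw [Set.mem_smul_set_iff_inv_smul_mem]
      simpa using K.one_mem
    obtain ⟨s, hs⟩ := hNc.elim_finite_subcover (fun n : N => (n : G) • (K : Set G))
      (fun n => hKopen.leftCoset _) hcover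
    have hsub : (QuotientGroup.mk' K) '' (N : Set G) ⊆
        ⋃ n ∈ s, {QuotientGroup.mk' K (n : G)} := by
      rintro q ⟨x, hx, rfl⟩
      obtain ⟨n, hn, hxn⟩ := Set.mem_iUnion₂.mp (hs hx)
      rw [Set.mem_smul_set_iff_inv_smul_mem] at hxn
      have : QuotientGroup.mk' K (n : G) = QuotientGroup.mk' K x := by
        simpa [QuotientGroup.mk'_apply] using (QuotientGroup.eq (s := K)).mpr hxn
      exact Set.mem_biUnion hn (by rw [← this]; rfl)
    exact (s.finite_toSet.biUnion fun _ _ => Set.finite_singleton _).subset hsub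
  -- the preimage of the center of G ⧸ K
  set Z' : Subgroup G := (Subgroup.center (G ⧸ K)).comap (QuotientGroup.mk' K) with hZ'
  have hKZ : K ≤ Z' := by
    intro k hk
    rw [hZ', Subgroup.mem_comap]
    have h1 : QuotientGroup.mk' K k = 1 := (QuotientGroup.eq_one_iff k).mpr hk
    rw [h1]
    exact Subgroup.one_mem _
  have hZopen : IsOpen (Z' : Set G) := Subgroup.isOpen_mono hKZ hKopen
  have hG_tm : IsTotallyMinimalGroup G :=
    aux_top (hctm ⊤ (by rw [Subgroup.coe_top]; exact isClosed_univ))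
  -- Step A : Z' has finite index
  haveI hZfi : Z'.FiniteIndex := by
    set Ω := {N : Subgroup G // N.Normal ∧ IsCompact (N : Set G) ∧ IsOpen (N : Set G)} with hΩ
    set F : Ω → Subgroup (G ⧸ K) := fun N => N.1.map (QuotientGroup.mk' K) with hF
    haveI hFnorm : ∀ N : Ω, (F N).Normal :=
      fun N => Subgroup.Normal.map N.2.1 _ (QuotientGroup.mk'_surjective K)
    haveI hFfin : ∀ N : Ω, Finite ↥(F N) := by
      intro N
      have h1 := himg_fin N.1 N.2.2.1
      have h2 : ((F N : Subgroup (G ⧸ K)) : Set (G ⧸ K)) =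
          (QuotientGroup.mk' K) '' (N.1 : Set G) := Subgroup.coe_map _ _
      rw [← h2] at h1
      exact h1.to_subtype
    set comp : ∀ N : Ω, G →* MulAut ↥(F N) :=
      fun N => MulAut.conjNormal.comp (QuotientGroup.mk' K) with hcomp
    letI topD : ∀ N : Ω, TopologicalSpace (MulAut ↥(F N)) := fun N => ⊥
    haveI hdisc : ∀ N : Ω, DiscreteTopology (MulAut ↥(F N)) := fun N => ⟨rfl⟩
    haveI : ∀ N : Ω, IsTopologicalGroup (MulAut ↥(F N)) := fun N =>
      { continuous_mul := continuous_of_discreteTopology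
        continuous_inv := continuous_of_discreteTopology }
    haveI : ∀ N : Ω, T2Space (MulAut ↥(F N)) := fun N => DiscreteTopology.toT2Space
    set ψ : G →* ∀ N : Ω, MulAut ↥(F N) := Pi.monoidHom comp with hψ
    have hψc : Continuous ψ := by
      apply aux_cont_of_const K hKopen
      intro t k hk
      funext N
      have h1 : QuotientGroup.mk' K k = 1 := (QuotientGroup.eq_one_iff k).mpr hk
      show comp N (t * k) = comp N t
      rw [hcomp]
      simp only [MonoidHom.comp_apply, map_mul, h1, map_one, mul_one]
    have hker : ∀ t, ψ t = 1 → t ∈ Z' := by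
      intro t h1
      rw [hZ', Subgroup.mem_comap, Subgroup.mem_center_iff]
      intro q
      obtain ⟨h, rfl⟩ := QuotientGroup.mk'_surjective K q
      obtain ⟨N, hN1, hN2, hN3, hN4⟩ := hscc h
      have hmem : QuotientGroup.mk' K h ∈ F ⟨N, hN1, hN2, hN3⟩ := ⟨h, hN4, rfl⟩
      have h2 : ψ t ⟨N, hN1, hN2, hN3⟩ = 1 := congrFun h1 _
      have h3 : MulAut.conjNormal (QuotientGroup.mk' K t)
          (⟨_, hmem⟩ : ↥(F ⟨N, hN1, hN2, hN3⟩)) = ⟨_, hmem⟩ := by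
        have : MulAut.conjNormal (QuotientGroup.mk' K t) =
            (1 : MulAut ↥(F ⟨N, hN1, hN2, hN3⟩)) := h2
        rw [this]; rfl
      have h4 := congrArg Subtype.val h3
      rw [MulAut.conjNormal_apply] at h4
      -- h4 : mk t * mk h * (mk t)⁻¹ = mk h
      calc QuotientGroup.mk' K h * QuotientGroup.mk' K t
          = (QuotientGroup.mk' K t * QuotientGroup.mk' K h * (QuotientGroup.mk' K t)⁻¹) *
            QuotientGroup.mk' K t := by rw [h4]
        _ = QuotientGroup.mk' K t * QuotientGroup.mk' K h := by group
    haveI hki : ∀ N : Ω, (comp N).ker.FiniteIndex := by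
      intro N
      haveI : Finite (MulAut ↥(F N)) :=
        Finite.of_injective (fun e => (⇑e : ↥(F N) → ↥(F N))) DFunLike.coe_injective
      infer_instance
    obtain ⟨I, V, hV, hsep⟩ := aux_extract hG_tm _ ψ hψc Z' hZopen hker
    have hJle : (⨅ N : ↥I, (comp N.1).ker) ≤ Z' := by
      intro t ht
      apply hsep t
      intro N hN
      have h5 : t ∈ (comp N).ker := Subgroup.mem_iInf.mp ht ⟨N, hN⟩
      have h6 : ψ t N = 1 := h5
      rw [h6]
      exact (hV N hN).2
    haveI : (⨅ N : ↥I, (comp N.1).ker).FiniteIndex :=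
      Subgroup.finiteIndex_iInf fun N => hki N.1
    refine ⟨fun h0 => ?_⟩
    have hdvd := Subgroup.index_dvd_of_le hJle
    rw [h0] at hdvd
    exact (Subgroup.FiniteIndex.index_ne_zero (H := ⨅ N : ↥I, (comp N.1).ker))
      (zero_dvd_iff.mp hdvd)
  -- Step B : K has finite relative index in Z'
  have hZclosed : IsClosed (Z' : Set G) := Subgroup.isClosed_of_isOpen _ hZopen
  have hA_tm : IsTotallyMinimalGroup ↥Z' := hctm Z' hZclosed
  set KA : Subgroup ↥Z' := K.subgroupOf Z' with hKA
  haveI : KA.Normal := Subgroup.normal_subgroupOf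
  set M := ↥Z' ⧸ KA with hM
  set mkA : ↥Z' →* M := QuotientGroup.mk' KA with hmkA
  have hcomm : ∀ x y : M, x * y = y * x := by
    intro x y
    obtain ⟨a, rfl⟩ := QuotientGroup.mk'_surjective KA x
    obtain ⟨b, rfl⟩ := QuotientGroup.mk'_surjective KA y
    show QuotientGroup.mk (a * b) = QuotientGroup.mk (b * a)
    rw [QuotientGroup.eq]
    rw [Subgroup.mem_subgroupOf]
    have hcen : (QuotientGroup.mk (a : G) : G ⧸ K) ∈ Subgroup.center (G ⧸ K) := a.2
    have h9 : (QuotientGroup.mk ((a : G) * (b : G)) : G ⧸ K) =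
        QuotientGroup.mk ((b : G) * (a : G)) := by
      rw [QuotientGroup.mk_mul, QuotientGroup.mk_mul]
      exact (Subgroup.mem_center_iff.mp hcen _).symm
    have h10 : ((a : G) * (b : G))⁻¹ * ((b : G) * (a : G)) ∈ K := QuotientGroup.eq.mp h9
    exact_mod_cast h10
  letI : CommGroup M := { (inferInstance : Group M) with mul_comm := hcomm }
  set Circ := Multiplicative (AddCircle (1 : ℝ)) with hCirc
  letI : CompactSpace Circ := inferInstanceAs (CompactSpace (AddCircle (1 : ℝ)))
  -- an injective additive hom from the rational circle to the real circle
  set jlin : ℚ →+ ℝ := AddMonoidHom.mk' (fun q => (q : ℝ)) (by intro a b; push_cast; ring)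
    with hjlin
  have hjcond : AddSubgroup.zmultiples (1 : ℚ) ≤
      (AddSubgroup.zmultiples (1 : ℝ)).comap jlin := by
    intro x hx
    obtain ⟨k, hk⟩ := AddSubgroup.mem_zmultiples_iff.mp hx
    rw [AddSubgroup.mem_comap]
    refine AddSubgroup.mem_zmultiples_iff.mpr ⟨k, ?_⟩
    rw [← hk, hjlin]
    simp
  set j : AddCircle (1 : ℚ) →+ AddCircle (1 : ℝ) :=
    QuotientAddGroup.map _ _ jlin hjcond with hj
  have hjinj : ∀ x : AddCircle (1 : ℚ), j x = 0 → x = 0 := by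
    intro x hx
    obtain ⟨q, rfl⟩ := QuotientAddGroup.mk_surjective x
    have h11 : j (QuotientAddGroup.mk q) = QuotientAddGroup.mk (jlin q) := rfl
    rw [h11, QuotientAddGroup.eq_zero_iff] at hx
    obtain ⟨k, hk⟩ := AddSubgroup.mem_zmultiples_iff.mp hx
    rw [QuotientAddGroup.eq_zero_iff]
    refine AddSubgroup.mem_zmultiples_iff.mpr ⟨k, ?_⟩
    have : ((k • (1 : ℚ) : ℚ) : ℝ) = k • (1 : ℝ) := by simp
    have h12 : (((k • (1 : ℚ) : ℚ)) : ℝ) = ((q : ℝ)) := by rw [this, hk]; rfl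
    exact_mod_cast h12
  -- characters separate the points of M
  have hsep_char : ∀ x : M, x ≠ 1 → ∃ χ : M →* Circ, χ x ≠ 1 := by
    intro x hx
    have hx' : (Additive.ofMul x : Additive M) ≠ 0 := hx
    obtain ⟨c, hc⟩ := CharacterModule.exists_character_apply_ne_zero_of_ne_zero hx'
    refine ⟨AddMonoidHom.toMultiplicativeRight (j.comp (c : Additive M →+ AddCircle (1 : ℚ))), ?_⟩
    intro hone
    have h13 : j (c (Additive.ofMul x)) = 0 := hone
    exact hc (hjinj _ h13)
  set X := M →* Circ with hX
  set DB : X → Type u := fun _ => ULift.{u} Circ with hDB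
  set ψB : ↥Z' →* ∀ χ : X, DB χ :=
    Pi.monoidHom (fun χ => (MulEquiv.ulift.symm.toMonoidHom).comp (χ.comp mkA)) with hψB
  have hKAopen : IsOpen (KA : Set ↥Z') := by
    have h14 : (KA : Set ↥Z') = (Subtype.val) ⁻¹' (K : Set G) := by
      ext a; exact Subgroup.mem_subgroupOf
    rw [h14]
    exact hKopen.preimage continuous_subtype_val
  have hψBc : Continuous ψB := by
    apply aux_cont_of_const KA hKAopen
    intro t k hk
    funext χ
    have h15 : mkA k = 1 := (QuotientGroup.eq_one_iff k).mpr hk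
    show MulEquiv.ulift.symm (χ (mkA (t * k))) = MulEquiv.ulift.symm (χ (mkA t))
    rw [map_mul, h15, mul_one]
  have hkerB : ∀ a, ψB a = 1 → a ∈ KA := by
    intro a h1
    by_contra hno
    have hx : mkA a ≠ 1 := fun h => hno ((QuotientGroup.eq_one_iff a).mp h)
    obtain ⟨χ, hχ⟩ := hsep_char _ hx
    have h16 : MulEquiv.ulift.symm (χ (mkA a)) = (1 : ULift.{u} Circ) := congrFun h1 χ
    apply hχ
    have := congrArg (MulEquiv.ulift (α := Circ)) h16
    simpa using this
  obtain ⟨I, V, hVB, hsepB⟩ := aux_extract hA_tm DB ψB hψBc KA hKAopen hkerB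
  -- M is finite
  have hMfin : Finite M := by
    by_contra hinf
    rw [not_finite_iff_infinite] at hinf
    set C := ({χ : X // χ ∈ I} → Circ) with hC
    set Φ : M →* C := Pi.monoidHom (fun χ' => χ'.1) with hΦ
    have hmem_of : ∀ xq : M, (∀ χ' : {χ : X // χ ∈ I}, χ'.1 xq ∈ ULift.up ⁻¹' V χ'.1) →
        xq = 1 := by
      intro xq hmem
      obtain ⟨a, ha⟩ := QuotientGroup.mk'_surjective KA xq
      have haK : a ∈ KA := by
        apply hsepB a
        intro χ hχ
        have h17 : ψB a χ = ULift.up (χ xq) := by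
          show MulEquiv.ulift.symm (χ (mkA a)) = _
          rw [ha]; rfl
        rw [h17]
        exact hmem ⟨χ, hχ⟩
      rw [← ha]
      exact (QuotientGroup.eq_one_iff a).mpr haK
    have hΦinj : Function.Injective Φ := by
      intro x y hxy
      have h18 : x * y⁻¹ = 1 := by
        apply hmem_of
        intro χ'
        have h19 : χ'.1 x = χ'.1 y := congrFun hxy χ'
        have h20 : χ'.1 (x * y⁻¹) = 1 := by rw [map_mul, map_inv, h19, mul_inv_cancel]
        rw [h20]
        exact (hVB χ'.1 χ'.2).2
      have h18b : x = (x * y⁻¹) * y := by group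
      rw [h18b, h18, one_mul]
    have hDinf : (Set.range Φ).Infinite :=
      Set.infinite_range_of_injective hΦinj
    obtain ⟨z, hz⟩ := hDinf.exists_accPt_principal
    set W0 : Set C := Set.univ.pi
      (fun χ' : {χ : X // χ ∈ I} => (ULift.up ⁻¹' V χ'.1 : Set Circ)) with hW0
    have hW0open : IsOpen W0 := isOpen_set_pi Set.finite_univ
      (fun χ' _ => (hVB χ'.1 χ'.2).1.preimage (Homeomorph.ulift.symm.continuous))
    have hW0mem : W0 ∈ 𝓝 (1 : C) := hW0open.mem_nhds (by
      rw [Set.mem_pi]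
      intro χ' _
      exact (hVB χ'.1 χ'.2).2)
    obtain ⟨W, hWnhds, hWsub⟩ := exists_nhds_split_inv hW0mem
    have hU1 : {y : C | z⁻¹ * y ∈ W} ∈ 𝓝 z := by
      have hcm : Continuous fun y : C => z⁻¹ * y := continuous_const.mul continuous_id
      apply hcm.continuousAt.preimage_mem_nhds
      rw [inv_mul_cancel]
      exact hWnhds
    obtain ⟨y₁, hy₁, hy₁z⟩ := accPt_iff_nhds.mp hz _ hU1
    have hU2 : ({y : C | z⁻¹ * y ∈ W} ∩ {y₁}ᶜ) ∈ 𝓝 z :=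
      Filter.inter_mem hU1 (isOpen_compl_singleton.mem_nhds (by
        simpa [Set.mem_compl_iff] using Ne.symm hy₁z))
    obtain ⟨y₂, hy₂, hy₂z⟩ := accPt_iff_nhds.mp hz _ hU2
    have hy2ne : y₁ ≠ y₂ := fun h => hy₂.1.2 h.symm
    have hdiv : y₁ / y₂ ∈ W0 := by
      have h21 := hWsub _ hy₁.1 _ hy₂.1.1
      rwa [mul_div_mul_left_eq_div] at h21
    obtain ⟨x₁, hx₁⟩ := hy₁.2
    obtain ⟨x₂, hx₂⟩ := hy₂.2
    have hxne : x₁ * x₂⁻¹ ≠ 1 := by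
      intro h
      apply hy2ne
      have h26 : x₁ = (x₁ * x₂⁻¹) * x₂ := by group
      rw [← hx₁, ← hx₂]
      rw [h26, h, one_mul]
    apply hxne
    apply hmem_of
    intro χ'
    have h24 : Φ (x₁ * x₂⁻¹) = y₁ / y₂ := by
      rw [map_mul, map_inv, hx₁, hx₂, div_eq_mul_inv]
    have h25 : χ'.1 (x₁ * x₂⁻¹) = (y₁ / y₂) χ' := by rw [← h24]; rfl
    rw [h25]
    exact (Set.mem_pi.mp hdiv) χ' (Set.mem_univ _)
  -- index arithmetic
  have hKArel : K.relIndex Z' ≠ 0 := by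
    rw [Subgroup.relIndex, Subgroup.index_eq_card]
    haveI := hMfin
    exact Nat.card_pos.ne'
  have hKidx : K.index ≠ 0 := by
    rw [← Subgroup.relIndex_mul_index hKZ]
    exact Nat.mul_ne_zero hKArel hZfi.index_ne_zero
  haveI : K.FiniteIndex := ⟨hKidx⟩
  refine ⟨?_⟩
  have huniv : (Set.univ : Set G) = ⋃ q : G ⧸ K, (q.out • (K : Set G)) := by
    ext g
    simp only [Set.mem_univ, true_iff, Set.mem_iUnion]
    refine ⟨QuotientGroup.mk g, ?_⟩
    rw [Set.mem_smul_set_iff_inv_smul_mem]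
    have h22 : (QuotientGroup.mk ((QuotientGroup.mk g : G ⧸ K).out) : G ⧸ K) =
        QuotientGroup.mk g := QuotientGroup.out_eq' _
    have h23 := QuotientGroup.eq.mp h22
    simpa using h23
  rw [huniv]
  exact isCompact_iUnion fun q => hKcomp.smul _
end

section
/- Let G be a compactly covered, locally compact, locally solvable, balanced topological group. Then every compact subset of G is contained in a compact open subgroup of G. -/
open Filter Topology
open scoped Manifold
open scoped commutatorElement

universe u

/-- A topological group is *compactly covered* if every element lies in a compact
subgroup. -/
def CompactlyCovered (G : Type u) [Group G] [TopologicalSpace G] : Prop :=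
  ∀ g : G, ∃ H : Subgroup G, IsCompact (H : Set G) ∧ g ∈ H

/-- A group is *locally solvable* if every finitely generated subgroup is solvable. -/
def LocallySolvable (G : Type u) [Group G] : Prop :=
  ∀ s : Finset G, IsSolvable ↥(Subgroup.closure (s : Set G))

/-- A topological group is *balanced* if it has a neighborhood base at the identity
consisting of sets invariant under all conjugations. -/
def IsBalancedGroup (G : Type u) [Group G] [TopologicalSpace G] : Prop :=
  ∀ U ∈ nhds (1 : G), ∃ V ∈ nhds (1 : G), V ⊆ U ∧ ∀ g : G, ∀ x ∈ V, g * x * g⁻¹ ∈ V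

universe v
set_option linter.unusedSectionVars false


namespace Stmt18

/-- Derived series of a subgroup, as subgroups of the ambient group. -/
def dser {G : Type*} [Group G] (A : Subgroup G) : ℕ → Subgroup G
  | 0 => A
  | n + 1 => ⁅dser A n, dser A n⁆

@[simp] lemma dser_zero {G : Type*} [Group G] (A : Subgroup G) : dser A 0 = A := rfl

lemma dser_succ {G : Type*} [Group G] (A : Subgroup G) (n : ℕ) :
    dser A (n + 1) = ⁅dser A n, dser A n⁆ := rfl

lemma dser_shift {G : Type*} [Group G] (A : Subgroup G) (n : ℕ) :
    dser A (n + 1) = dser ⁅A, A⁆ n := by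
  induction n with
  | zero => rfl
  | succ n ih => rw [dser_succ, ih, dser_succ]

lemma dser_mono {G : Type*} [Group G] {A B : Subgroup G} (h : A ≤ B) (n : ℕ) :
    dser A n ≤ dser B n := by
  induction n with
  | zero => exact h
  | succ n ih => exact Subgroup.commutator_mono ih ih

lemma map_dser {G : Type*} [Group G] {H : Type*} [Group H] (f : G →* H) (A : Subgroup G) (n : ℕ) :
    (dser A n).map f = dser (A.map f) n := by
  induction n with
  | zero => rfl
  | succ n ih => rw [dser_succ, Subgroup.map_commutator, ih, dser_succ]

lemma derivedSeries_eq_dser_top (G : Type*) [Group G] (n : ℕ) :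
    derivedSeries G n = dser (⊤ : Subgroup G) n := by
  induction n with
  | zero => rfl
  | succ n ih => rw [derivedSeries_succ, ih, dser_succ]

/-- Transfer: derived series of the subtype group maps to `dser`. -/
lemma map_subtype_derivedSeries {G : Type*} [Group G] (A : Subgroup G) (n : ℕ) :
    (derivedSeries A n).map A.subtype = dser A n := by
  rw [derivedSeries_eq_dser_top, map_dser]
  rw [← MonoidHom.range_eq_map, A.range_subtype]

lemma isSolvable_iff_dser {G : Type*} [Group G] (A : Subgroup G) :
    IsSolvable A ↔ ∃ n, dser A n = ⊥ := by
  rw [IsSolvable, isSolvable_def]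
  constructor
  · rintro ⟨n, hn⟩
    exact ⟨n, by rw [← map_subtype_derivedSeries, hn, Subgroup.map_bot]⟩
  · rintro ⟨n, hn⟩
    refine ⟨n, ?_⟩
    have := map_subtype_derivedSeries A n
    rw [hn] at this
    rwa [Subgroup.map_eq_bot_iff_of_injective _ A.subtype_injective] at this

/-- Finitely generated torsion solvable groups are finite. -/
lemma finite_of_fg_torsion_solvable_aux (n : ℕ) :
    ∀ (Γ : Type v) [Group Γ], Group.FG Γ → (∀ x : Γ, ∃ m : ℕ, 0 < m ∧ x ^ m = 1) →
      derivedSeries Γ n = ⊥ → Finite Γ := by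
  induction n with
  | zero =>
    intro Γ _ _ _ h
    have : ∀ x : Γ, x = 1 := by
      intro x
      have : x ∈ derivedSeries Γ 0 := Subgroup.mem_top x
      rw [h] at this; simpa using this
    have : Subsingleton Γ := ⟨fun a b => by rw [this a, this b]⟩
    exact Finite.of_subsingleton
  | succ n ih =>
    intro Γ _ fg tor h
    set A : Subgroup Γ := commutator Γ with hA
    have hsurj : Function.Surjective (Abelianization.of : Γ →* Abelianization Γ) := fun q =>
      QuotientGroup.mk_surjective q
    have finQ : Finite (Abelianization Γ) := by
      have fgQ : Group.FG (Abelianization Γ) := Group.fg_of_surjective hsurj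
      have torQ : Monoid.IsTorsion (Abelianization Γ) := by
        intro q
        obtain ⟨g, rfl⟩ := hsurj q
        obtain ⟨m, hm, hgm⟩ := tor g
        refine isOfFinOrder_iff_pow_eq_one.2 ⟨m, hm, ?_⟩
        rw [← map_pow, hgm, map_one]
      exact CommGroup.finite_of_fg_torsion _ torQ
    have finQ' : Finite (Γ ⧸ A) := finQ
    have hidx : A.FiniteIndex := by
      constructor
      have : Nat.card (Γ ⧸ A) ≠ 0 := Nat.card_ne_zero.2 ⟨⟨1⟩, finQ'⟩
      simpa [Subgroup.index] using this
    have fgA : Group.FG A := Subgroup.fg_of_index_ne_zero A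
    have torA : ∀ x : A, ∃ m : ℕ, 0 < m ∧ x ^ m = 1 := by
      intro x
      obtain ⟨m, hm, hx⟩ := tor (x : Γ)
      exact ⟨m, hm, by ext; push_cast; simpa using hx⟩
    have hdA : derivedSeries A n = ⊥ := by
      have key : dser A n = ⊥ := by
        have h1 : derivedSeries Γ (n + 1) = dser A n := by
          rw [derivedSeries_eq_dser_top, dser_shift, hA, commutator_def]
        rw [← h1, h]
      have := map_subtype_derivedSeries A n
      have hle : (derivedSeries A n).map A.subtype ≤ ⊥ := by rw [this, key]
      rwa [← Subgroup.map_eq_bot_iff_of_injective _ A.subtype_injective, ← le_bot_iff]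
    have finA : Finite A := ih A fgA torA hdA
    exact Finite.of_equiv ((Γ ⧸ A) × A) (Subgroup.groupEquivQuotientProdSubgroup (s := A)).symm

lemma finite_of_fg_torsion_solvable (Γ : Type v) [Group Γ] (fg : Group.FG Γ)
    (tor : ∀ x : Γ, ∃ m : ℕ, 0 < m ∧ x ^ m = 1) (sol : IsSolvable Γ) : Finite Γ := by
  obtain ⟨n, hn⟩ := isSolvable_def Γ |>.1 sol
  exact finite_of_fg_torsion_solvable_aux n Γ fg tor hn

end Stmt18



namespace Stmt18T

open Filter Topology

variable {G : Type u} [Group G] [TopologicalSpace G] [IsTopologicalGroup G]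

/-- commutator of closures lies in closure of commutator -/
lemma commutator_topClosure_le [T2Space G] (A B : Subgroup G) :
    ⁅A.topologicalClosure, B.topologicalClosure⁆ ≤ ⁅A, B⁆.topologicalClosure := by
  rw [Subgroup.commutator_le]
  have step1 : ∀ y ∈ B, ∀ x ∈ A.topologicalClosure, ⁅x, y⁆ ∈ ⁅A, B⁆.topologicalClosure := by
    intro y hy x hx
    have hc : Continuous fun x : G => ⁅x, y⁆ := by
      simp only [commutatorElement_def]; fun_prop
    have : (A : Set G) ⊆ (fun x : G => ⁅x, y⁆) ⁻¹' (⁅A, B⁆.topologicalClosure : Set G) := by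
      intro a ha
      exact Subgroup.le_topologicalClosure _ (Subgroup.commutator_mem_commutator ha hy)
    have hcl : closure (A : Set G) ⊆ (fun x : G => ⁅x, y⁆) ⁻¹' (⁅A, B⁆.topologicalClosure : Set G) :=
      closure_minimal this (IsClosed.preimage hc (Subgroup.isClosed_topologicalClosure _))
    exact hcl hx
  intro x hx y hy
  have hc : Continuous fun y : G => ⁅x, y⁆ := by
    simp only [commutatorElement_def]; fun_prop
  have : (B : Set G) ⊆ (fun y : G => ⁅x, y⁆) ⁻¹' (⁅A, B⁆.topologicalClosure : Set G) := by
    intro b hb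
    exact step1 b hb x hx
  have hcl : closure (B : Set G) ⊆ (fun y : G => ⁅x, y⁆) ⁻¹' (⁅A, B⁆.topologicalClosure : Set G) :=
    closure_minimal this (IsClosed.preimage hc (Subgroup.isClosed_topologicalClosure _))
  exact hcl hy

lemma topClosure_bot [T2Space G] :
    ((⊥ : Subgroup G).topologicalClosure) = ⊥ := by
  have : ((⊥ : Subgroup G).topologicalClosure : Set G) = ({1} : Set G) := by
    rw [Subgroup.coe_topologicalClosure_bot]
    exact closure_singleton
  apply Subgroup.ext
  intro x
  constructor
  · intro hx
    have : x ∈ ({1} : Set G) := this ▸ hx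
    simpa using this
  · intro hx
    simp only [Subgroup.mem_bot] at hx
    subst hx; exact Subgroup.one_mem _

/-- Existence of a compact symmetric conjugation-invariant neighborhood of 1. -/
lemma exists_good_V [T2Space G] [LocallyCompactSpace G]
    (hbal : ∀ U ∈ nhds (1 : G), ∃ V ∈ nhds (1 : G), V ⊆ U ∧ ∀ g : G, ∀ x ∈ V, g * x * g⁻¹ ∈ V) :
    ∃ V : Set G, IsCompact V ∧ V ∈ 𝓝 (1 : G) ∧ V⁻¹ = V ∧ ∀ g : G, (fun x => g * x * g⁻¹) '' V = V := by
  obtain ⟨C, hC, hCn⟩ := exists_compact_mem_nhds (1 : G)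
  obtain ⟨V₀, hV₀n, hV₀C, hV₀inv⟩ := hbal C hCn
  set V₁ : Set G := V₀ ∩ V₀⁻¹ with hV₁
  have hV₁n : V₁ ∈ 𝓝 (1 : G) := by
    exact Filter.inter_mem hV₀n (inv_mem_nhds_one G hV₀n)
  have hV₁sym : V₁⁻¹ = V₁ := by
    ext x; simp only [hV₁, Set.mem_inv, Set.mem_inter_iff]
    constructor
    · rintro ⟨h1, h2⟩; exact ⟨by simpa using h2, by simpa using h1⟩
    · rintro ⟨h1, h2⟩; exact ⟨by simpa using h2, by simpa using h1⟩
  have hV₁inv : ∀ g : G, ∀ x ∈ V₁, g * x * g⁻¹ ∈ V₁ := by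
    rintro g x ⟨h1, h2⟩
    constructor
    · exact hV₀inv g x h1
    · have := hV₀inv g x⁻¹ (by simpa using h2)
      simp only [Set.mem_inv]
      have hx : (g * x * g⁻¹)⁻¹ = g * x⁻¹ * g⁻¹ := by group
      rw [hx]; exact this
  refine ⟨closure V₁, ?_, ?_, ?_, ?_⟩
  · apply IsCompact.of_isClosed_subset hC isClosed_closure
    exact closure_minimal (fun x hx => hV₀C hx.1) hC.isClosed
  · exact Filter.mem_of_superset hV₁n subset_closure
  · rw [inv_closure, hV₁sym]
  · intro g
    set hhom : G ≃ₜ G := (Homeomorph.mulLeft g).trans (Homeomorph.mulRight g⁻¹) with hh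
    have hcoe : ⇑hhom = fun x => g * x * g⁻¹ := by
      funext x; simp [hh]
    rw [← hcoe, Homeomorph.image_closure]
    suffices h : (fun x => g * x * g⁻¹) '' V₁ = V₁ by rw [hcoe, h]
    apply Set.Subset.antisymm
    · rintro _ ⟨x, hx, rfl⟩; exact hV₁inv g x hx
    · intro x hx
      exact ⟨g⁻¹ * x * g, by simpa [mul_assoc] using hV₁inv g⁻¹ x hx, by group⟩

end Stmt18T

namespace CGsec

open Filter Topology Pointwise Stmt18T

variable {G : Type u} [Group G] [TopologicalSpace G] [IsTopologicalGroup G] [T2Space G]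
variable {V : Set G}

set_option linter.unusedSectionVars false in
lemma coe_inv_subgroup (D : Subgroup G) : (D : Set G)⁻¹ = (D : Set G) := by
  ext x; simp

/-- Covering lemma: a compact subset of `D` is covered by finitely many
left cosets of any subgroup `W` with `V ∩ D ⊆ W`. -/
lemma cov (hVn : V ∈ 𝓝 (1 : G))
    (D : Subgroup G) (X : Set G) (hVW : V ∩ (D : Set G) ⊆ X)
    (S : Set G) (hS : IsCompact S) (hSD : S ⊆ (D : Set G)) :
    ∃ T : Finset G, ↑T ⊆ (D : Set G) ∧ ∀ s ∈ S, ∃ t ∈ T, t⁻¹ * s ∈ X := by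
  have h1 : (1 : G) ∈ interior V := mem_interior_iff_mem_nhds.2 hVn
  obtain ⟨T, hTS, hcov⟩ := hS.elim_nhds_subcover (fun x => (fun y => x * y) '' interior V)
    (by
      intro x _
      have : IsOpen ((fun y => x * y) '' interior V) := isOpenMap_mul_left x _ isOpen_interior
      exact this.mem_nhds ⟨1, h1, mul_one x⟩)
  refine ⟨T, fun t ht => hSD (hTS t ht), ?_⟩
  intro s hs
  obtain ⟨t, ht, hmem⟩ := Set.mem_iUnion₂.1 (hcov hs)
  obtain ⟨y, hy, hxy⟩ := hmem
  refine ⟨t, ht, ?_⟩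
  have hyV : y ∈ V := interior_subset hy
  have heq : t⁻¹ * s = y := by rw [← hxy]; group
  have htD : t ∈ (D : Set G) := hSD (hTS t ht)
  have hsD : s ∈ (D : Set G) := hSD hs
  have hD2 : t⁻¹ * s ∈ (D : Set G) := by
    simpa using mul_mem (inv_mem (by exact htD : t ∈ D)) (by exact hsD : s ∈ D)
  exact hVW ⟨heq ▸ hyV, hD2⟩

/-- A subgroup of a closed subgroup `D` containing `V ∩ D` is closed. -/
lemma closed_of (hVn : V ∈ 𝓝 (1 : G))
    (D : Subgroup G) (hD : IsClosed (D : Set G)) (W : Subgroup G) (hWD : W ≤ D)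
    (hVW : V ∩ (D : Set G) ⊆ (W : Set G)) : IsClosed (W : Set G) := by
  have h1 : (1 : G) ∈ interior V := mem_interior_iff_mem_nhds.2 hVn
  rw [← closure_subset_iff_isClosed]
  intro x hx
  have hxD : x ∈ (D : Set G) := by
    have : closure (W : Set G) ⊆ closure (D : Set G) := closure_mono (fun a ha => hWD ha)
    exact hD.closure_subset (this hx)
  have hopen : IsOpen ((fun y => x * y) '' interior V) := isOpenMap_mul_left x _ isOpen_interior
  have hmem : x ∈ (fun y => x * y) '' interior V := ⟨1, h1, mul_one x⟩
  obtain ⟨w, hwo, hwW⟩ := (mem_closure_iff.1 hx) _ hopen hmem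
  obtain ⟨y, hy, hxy⟩ := hwo
  have hyV : y ∈ V := interior_subset hy
  have hinvw : x⁻¹ * w = y := by rw [← hxy]; group
  have hyD : x⁻¹ * w ∈ (D : Set G) := by
    simpa using mul_mem (inv_mem hxD) (hWD hwW)
  have : x⁻¹ * w ∈ W := hVW ⟨hinvw ▸ hyV, hyD⟩
  have : w * (x⁻¹ * w)⁻¹ ∈ W := mul_mem hwW (inv_mem this)
  simpa [mul_assoc] using this

-- CG lemma (to append to topo.lean inside CGsec)
section CG
variable {G : Type u} [Group G] [TopologicalSpace G] [IsTopologicalGroup G] [T2Space G]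
variable {V : Set G}

set_option maxHeartbeats 1000000 in
lemma compact_of_cg
    (hcc : ∀ g : G, ∃ H : Subgroup G, IsCompact (H : Set G) ∧ g ∈ H)
    (hsolv : ∀ s : Finset G, IsSolvable ↥(Subgroup.closure (s : Set G)))
    (hV : IsCompact V) (hVn : V ∈ 𝓝 (1 : G)) (hVsym : V⁻¹ = V)
    (hVinv : ∀ g x : G, x ∈ V → g * x * g⁻¹ ∈ V)
    (D : Subgroup G) (hDc : IsClosed (D : Set G)) (S : Set G) (hS : IsCompact S)
    (hSD : S ⊆ (D : Set G))
    (hgen : ∀ d ∈ D, d ∈ Subgroup.closure (S ∪ (V ∩ (D : Set G))))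
    (hFG : ∀ F : Finset G, ↑F ⊆ (D : Set G) →
      IsCompact ((Subgroup.closure ((F : Set G))).topologicalClosure : Set G)) :
    IsCompact (D : Set G) := by
  classical
  set VD : Set G := V ∩ (D : Set G) with hVDdef
  have hVD : IsCompact VD := hV.inter_right hDc
  have hVDD : VD ⊆ (D : Set G) := Set.inter_subset_right
  have hVDsym : VD⁻¹ = VD := by
    have : (↑D : Set G)⁻¹ = (↑D : Set G) := coe_inv_subgroup D
    rw [hVDdef, Set.inter_inv, hVsym, this]
  set W : Subgroup G := Subgroup.closure VD with hWdef
  have hVDW : VD ⊆ (W : Set G) := Subgroup.subset_closure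
  have hWD : W ≤ D := (Subgroup.closure_le D).2 hVDD
  -- commuting elements of VD past elements of D
  have hcomm : ∀ g : G, g ∈ D → ∀ v ∈ VD, ∃ v' ∈ VD, v * g = g * v' := by
    intro g hg v hv
    refine ⟨g⁻¹ * v * g, ⟨?_, ?_⟩, by group⟩
    · have := hVinv g⁻¹ v hv.1
      simpa using this
    · exact mul_mem (mul_mem (inv_mem hg) (hVDD hv)) hg
  -- finite set F₀ with VD * VD ⊆ F₀ * VD
  have hVD2D : VD * VD ⊆ (D : Set G) := by
    rintro x ⟨a, ha, b, hb, rfl⟩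
    exact mul_mem (hVDD ha) (hVDD hb)
  obtain ⟨F₀, hF₀D, hF₀⟩ := cov hVn D VD (subset_refl _) (VD * VD) (hVD.mul hVD) hVD2D
  set E : Subgroup G := Subgroup.closure ((F₀ : Finset G) : Set G) with hEdef
  have hED : E ≤ D := (Subgroup.closure_le D).2 hF₀D
  -- every product of elements of VD is e * v with e ∈ E, v ∈ VD
  have hlist : ∀ l : List G, (∀ x ∈ l, x ∈ VD) → ∃ e ∈ E, ∃ v ∈ VD, l.prod = e * v := by
    intro l
    induction l with
    | nil =>
      intro _
      exact ⟨1, one_mem _, 1, ⟨mem_of_mem_nhds hVn, one_mem _⟩, by simp⟩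
    | cons a l ih =>
      intro hmem
      obtain ⟨e, he, w, hw, hprod⟩ := ih (fun x hx => hmem x (List.mem_cons_of_mem a hx))
      have haVD : a ∈ VD := hmem a List.mem_cons_self
      obtain ⟨a', ha', haa⟩ := hcomm e (hED he) a haVD
      have hmul : a' * w ∈ VD * VD := Set.mul_mem_mul ha' hw
      obtain ⟨f, hf, hfv⟩ := hF₀ _ hmul
      refine ⟨e * f, mul_mem he (Subgroup.subset_closure hf), f⁻¹ * (a' * w), hfv, ?_⟩
      rw [List.prod_cons, hprod, ← mul_assoc, haa]
      group
  -- W is compact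
  have hWclosed : IsClosed (W : Set G) := closed_of hVn D hDc W hWD hVDW
  have hWsub : (W : Set G) ⊆
      ((Subgroup.closure ((F₀ : Finset G) : Set G)).topologicalClosure : Set G) * VD := by
    intro w hw
    have hw' : w ∈ Submonoid.closure (VD ∪ VD⁻¹) := by
      rw [← Subgroup.closure_toSubmonoid]
      exact hw
    rw [hVDsym, Set.union_self] at hw'
    obtain ⟨l, hl, hlp⟩ := Submonoid.exists_list_of_mem_closure hw'
    obtain ⟨e, he, v, hv, hev⟩ := hlist l hl
    exact ⟨e, Subgroup.le_topologicalClosure _ he, v, hv, by show e * v = w; rw [← hev, hlp]⟩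
  have hWcomp : IsCompact (W : Set G) :=
    IsCompact.of_isClosed_subset ((hFG F₀ hF₀D).mul hVD) hWclosed hWsub
  -- W is normal in D
  have hWnorm : ∀ g : G, g ∈ D → ∀ w ∈ W, g * w * g⁻¹ ∈ W := by
    intro g hg w hw
    induction hw using Subgroup.closure_induction with
    | mem x hx =>
      refine hVDW ⟨hVinv g x hx.1, ?_⟩
      exact mul_mem (mul_mem hg (hVDD hx)) (inv_mem hg)
    | one => simpa using one_mem W
    | mul x y hx hy ihx ihy =>
      have : g * (x * y) * g⁻¹ = (g * x * g⁻¹) * (g * y * g⁻¹) := by group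
      rw [this]; exact mul_mem ihx ihy
    | inv x hx ihx =>
      have : g * x⁻¹ * g⁻¹ = (g * x * g⁻¹)⁻¹ := by group
      rw [this]; exact inv_mem ihx
  haveI hWnormal : (W.subgroupOf D).Normal := by
    constructor
    intro n hn g
    rw [Subgroup.mem_subgroupOf] at hn ⊢
    exact hWnorm (↑g) g.2 (↑n) hn
  -- the quotient
  set Q := ↥D ⧸ (W.subgroupOf D) with hQdef
  have mk_surj : Function.Surjective (QuotientGroup.mk' (W.subgroupOf D)) :=
    QuotientGroup.mk'_surjective _
  -- torsion
  have torQ : ∀ q : Q, ∃ m : ℕ, 0 < m ∧ q ^ m = 1 := by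
    intro q
    obtain ⟨x, rfl⟩ := mk_surj q
    obtain ⟨C, hCcomp, hxC⟩ := hcc (↑x : G)
    obtain ⟨T₁, hT₁D, hT₁⟩ := cov hVn D (W : Set G) hVDW ((C : Set G) ∩ (D : Set G))
      (hCcomp.inter_right hDc) Set.inter_subset_right
    have hxn : ∀ n : ℕ, (↑x : G) ^ n ∈ (C : Set G) ∩ (D : Set G) :=
      fun n => ⟨pow_mem hxC n, pow_mem x.2 n⟩
    choose t ht hwt using fun n => hT₁ _ (hxn n)
    have key : ∀ i j : ℕ, i < j → t i = t j →
        ∃ m : ℕ, 0 < m ∧ (QuotientGroup.mk' (W.subgroupOf D) x) ^ m = 1 := by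
      intro i j hij htij
      refine ⟨j - i, Nat.sub_pos_of_lt hij, ?_⟩
      rw [← map_pow, QuotientGroup.mk'_apply, QuotientGroup.eq_one_iff]
      rw [Subgroup.mem_subgroupOf]
      have hcoe : ((x ^ (j - i) : ↥D) : G) = (↑x : G) ^ (j - i) := by push_cast; ring_nf
      rw [hcoe]
      have hpow : (↑x : G) ^ (j - i) = ((↑x : G) ^ i)⁻¹ * (↑x : G) ^ j := by
        have : (↑x : G) ^ j = (↑x : G) ^ i * (↑x : G) ^ (j - i) := by
          rw [← pow_add]
          congr 1
          omega
        rw [this]; group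
      rw [hpow]
      have h1 : (t i)⁻¹ * (↑x : G) ^ i ∈ W := hwt i
      have h2 : (t j)⁻¹ * (↑x : G) ^ j ∈ W := hwt j
      have : ((t i)⁻¹ * (↑x : G) ^ i)⁻¹ * ((t j)⁻¹ * (↑x : G) ^ j) ∈ W :=
        mul_mem (inv_mem h1) h2
      have heq : ((t i)⁻¹ * (↑x : G) ^ i)⁻¹ * ((t j)⁻¹ * (↑x : G) ^ j)
          = ((↑x : G) ^ i)⁻¹ * (↑x : G) ^ j := by
        rw [htij]; group
      rwa [heq] at this
    obtain ⟨a, b, hab, heq⟩ :=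
      Finite.exists_ne_map_eq_of_infinite (fun n : ℕ => (⟨t n, ht n⟩ : {y // y ∈ T₁}))
    have heq' : t a = t b := congrArg Subtype.val heq
    rcases lt_or_gt_of_ne hab with h | h
    · exact key a b h heq'
    · exact key b a h heq'.symm
  -- finitely generated and solvable
  obtain ⟨T₀, hT₀D, hT₀⟩ := cov hVn D (W : Set G) hVDW S hS hSD
  set E₀ : Subgroup G := Subgroup.closure ((T₀ : Finset G) : Set G) with hE₀def
  have hE₀D : E₀ ≤ D := (Subgroup.closure_le D).2 hT₀D
  set φ : ↥E₀ →* Q := (QuotientGroup.mk' (W.subgroupOf D)).comp (Subgroup.inclusion hE₀D)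
    with hφdef
  have hclD : Subgroup.closure (S ∪ VD) ≤ D :=
    (Subgroup.closure_le D).2 (Set.union_subset hSD hVDD)
  have φsurj : Function.Surjective φ := by
    intro q
    obtain ⟨x, rfl⟩ := mk_surj q
    have hkey : ∀ (g : G) (hmem : g ∈ Subgroup.closure (S ∪ VD)),
        ∀ hgD : g ∈ D, QuotientGroup.mk' (W.subgroupOf D) ⟨g, hgD⟩ ∈ φ.range := by
      intro g hmem
      induction hmem using Subgroup.closure_induction with
      | mem y hy =>
        intro hgD
        rcases hy with hyS | hyV
        · obtain ⟨u, huT₀, huw⟩ := hT₀ y hyS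
          have huD : u ∈ D := hT₀D huT₀
          have hmk : QuotientGroup.mk' (W.subgroupOf D) ⟨y, hgD⟩
              = QuotientGroup.mk' (W.subgroupOf D) ⟨u, huD⟩ := by
            rw [QuotientGroup.mk'_eq_mk']
            refine ⟨⟨y⁻¹ * u, ?_⟩ , ?_, ?_⟩
            · exact mul_mem (inv_mem hgD) huD
            · rw [Subgroup.mem_subgroupOf]
              have : (u⁻¹ * y)⁻¹ ∈ W := inv_mem huw
              simpa using this
            · ext
              push_cast
              group
          rw [hmk]
          exact ⟨⟨u, Subgroup.subset_closure huT₀⟩, rfl⟩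
        · have : QuotientGroup.mk' (W.subgroupOf D) ⟨y, hgD⟩ = 1 := by
            rw [QuotientGroup.mk'_apply, QuotientGroup.eq_one_iff, Subgroup.mem_subgroupOf]
            exact hVDW hyV
          rw [this]
          exact one_mem _
      | one =>
        intro hgD
        have : (⟨(1 : G), hgD⟩ : ↥D) = 1 := rfl
        rw [this, map_one]
        exact one_mem _
      | mul y z hy hz ihy ihz =>
        intro hgD
        have hyD : y ∈ D := hclD hy
        have hzD : z ∈ D := hclD hz
        have : (⟨y * z, hgD⟩ : ↥D) = ⟨y, hyD⟩ * ⟨z, hzD⟩ := rfl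
        rw [this, map_mul]
        exact mul_mem (ihy hyD) (ihz hzD)
      | inv y hy ihy =>
        intro hgD
        have hyD : y ∈ D := hclD hy
        have : (⟨y⁻¹, hgD⟩ : ↥D) = (⟨y, hyD⟩ : ↥D)⁻¹ := rfl
        rw [this, map_inv]
        exact inv_mem (ihy hyD)
    have hx : QuotientGroup.mk' (W.subgroupOf D) ⟨(↑x : G), x.2⟩ ∈ φ.range :=
      hkey (↑x : G) (hgen _ x.2) x.2
    simpa using hx
  haveI : Group.FG ↥E₀ := Group.closure_finset_fg T₀
  have fgQ : Group.FG Q := Group.fg_of_surjective φsurj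
  haveI solE : Group.IsSolvable ↥E₀ := hsolv T₀
  have solQ : IsSolvable Q := solvable_of_surjective φsurj
  have finQ : Finite Q := Stmt18.finite_of_fg_torsion_solvable Q fgQ torQ solQ
  -- conclude
  have hcover : (D : Set G) ⊆
      (Set.range fun q : Q => ((Quotient.out q : ↥D) : G)) * (W : Set G) := by
    intro d hd
    set x : ↥D := ⟨d, hd⟩ with hxdef
    set q : Q := QuotientGroup.mk' (W.subgroupOf D) x with hqdef
    have hout : QuotientGroup.mk (Quotient.out q) = q := QuotientGroup.out_eq' q
    have hrel : (Quotient.out q)⁻¹ * x ∈ W.subgroupOf D := by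
      rw [← QuotientGroup.eq]
      rw [hout, hqdef, QuotientGroup.mk'_apply]
    refine ⟨((Quotient.out q : ↥D) : G), ⟨q, rfl⟩, ((Quotient.out q)⁻¹ * x : ↥D), ?_, ?_⟩
    · rw [Subgroup.mem_subgroupOf] at hrel
      exact hrel
    · push_cast
      group
      rfl
  have hTfin : (Set.range fun q : Q => ((Quotient.out q : ↥D) : G)).Finite :=
    Set.finite_range _
  exact IsCompact.of_isClosed_subset (hTfin.isCompact.mul hWcomp) hDc hcover

end CG

section Pind
variable {G : Type u} [Group G] [TopologicalSpace G] [IsTopologicalGroup G] [T2Space G]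
variable {V : Set G}

lemma topClosure_mono {A B : Subgroup G} (h : A ≤ B) :
    A.topologicalClosure ≤ B.topologicalClosure :=
  Subgroup.topologicalClosure_minimal A (h.trans (Subgroup.le_topologicalClosure B))
    (Subgroup.isClosed_topologicalClosure B)

lemma dser_topClosure_le (A : Subgroup G) (n : ℕ) :
    Stmt18.dser A.topologicalClosure n ≤ (Stmt18.dser A n).topologicalClosure := by
  induction n with
  | zero => exact le_refl _
  | succ n ih =>
    rw [Stmt18.dser_succ, Stmt18.dser_succ]
    calc ⁅Stmt18.dser A.topologicalClosure n, Stmt18.dser A.topologicalClosure n⁆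
        ≤ ⁅(Stmt18.dser A n).topologicalClosure, (Stmt18.dser A n).topologicalClosure⁆ :=
          Subgroup.commutator_mono ih ih
      _ ≤ ⁅Stmt18.dser A n, Stmt18.dser A n⁆.topologicalClosure :=
          commutator_topClosure_le _ _

set_option maxHeartbeats 2000000 in
lemma compact_closure_of_fg
    (hcc : ∀ g : G, ∃ H : Subgroup G, IsCompact (H : Set G) ∧ g ∈ H)
    (hsolv : ∀ s : Finset G, IsSolvable ↥(Subgroup.closure (s : Set G)))
    (hV : IsCompact V) (hVn : V ∈ 𝓝 (1 : G)) (hVsym : V⁻¹ = V)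
    (hVinv : ∀ g x : G, x ∈ V → g * x * g⁻¹ ∈ V) :
    ∀ n : ℕ, ∀ F : Finset G, Stmt18.dser (Subgroup.closure (F : Set G)) n = ⊥ →
      IsCompact ((Subgroup.closure (F : Set G)).topologicalClosure : Set G) := by
  intro n
  induction n with
  | zero =>
    intro F hF
    rw [Stmt18.dser_zero] at hF
    rw [hF, topClosure_bot, Subgroup.coe_bot]
    exact isCompact_singleton
  | succ n ih =>
    intro F hF
    classical
    set H : Subgroup G := Subgroup.closure (F : Set G) with hHdef
    set Hb : Subgroup G := H.topologicalClosure with hHbdef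
    have hHbclosed : IsClosed (Hb : Set G) := Subgroup.isClosed_topologicalClosure H
    set Db : Subgroup G := (⁅H, H⁆ : Subgroup G).topologicalClosure with hDbdef
    have hDbclosed : IsClosed (Db : Set G) := Subgroup.isClosed_topologicalClosure _
    have hcommH : (⁅H, H⁆ : Subgroup G) ≤ H := by
      rw [Subgroup.commutator_le]
      intro g hg h hh
      exact mul_mem (mul_mem (mul_mem hg hh) (inv_mem hg)) (inv_mem hh)
    have hDbHb : Db ≤ Hb := topClosure_mono hcommH
    have hcommHb : (⁅Hb, Hb⁆ : Subgroup G) ≤ Db := commutator_topClosure_le H H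
    have hDbnorm : ∀ x ∈ Hb, ∀ d ∈ Db, x * d * x⁻¹ ∈ Db := by
      intro x hx d hd
      have hcomm : ⁅x, d⁆ ∈ Db := hcommHb (Subgroup.commutator_mem_commutator hx (hDbHb hd))
      have : x * d * x⁻¹ = ⁅x, d⁆ * d := by
        rw [commutatorElement_def]; group
      rw [this]
      exact mul_mem hcomm hd
    -- compact subgroups containing the generators
    have hcc' := hcc
    choose C hCcomp hCmem using hcc'
    -- main list induction
    have main : ∀ l : List G,
        (((⁅H, H⁆ : Subgroup G).topologicalClosure : Set G) ⊆
            (l.map fun f => ((C f : Set G) ∩ (Hb : Set G))).prod * (Db : Set G)) ∧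
        ((l.map fun f => ((C f : Set G) ∩ (Hb : Set G))).prod * (Db : Set G) ⊆ (Hb : Set G)) ∧
        (∀ a b : G, a ∈ (l.map fun f => ((C f : Set G) ∩ (Hb : Set G))).prod * (Db : Set G) →
          b ∈ (l.map fun f => ((C f : Set G) ∩ (Hb : Set G))).prod * (Db : Set G) →
          a * b ∈ (l.map fun f => ((C f : Set G) ∩ (Hb : Set G))).prod * (Db : Set G)) ∧
        (∀ a : G, a ∈ (l.map fun f => ((C f : Set G) ∩ (Hb : Set G))).prod * (Db : Set G) →
          a⁻¹ ∈ (l.map fun f => ((C f : Set G) ∩ (Hb : Set G))).prod * (Db : Set G)) ∧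
        (∀ x ∈ Hb, ∀ a ∈ (l.map fun f => ((C f : Set G) ∩ (Hb : Set G))).prod * (Db : Set G),
          x * a * x⁻¹ ∈ (l.map fun f => ((C f : Set G) ∩ (Hb : Set G))).prod * (Db : Set G)) ∧
        (∃ Kc : Set G, IsCompact Kc ∧ Kc ⊆ (Hb : Set G) ∧
          (l.map fun f => ((C f : Set G) ∩ (Hb : Set G))).prod * (Db : Set G) =
            Kc * (Db : Set G)) ∧
        (∀ f ∈ l, ((C f : Set G) ∩ (Hb : Set G)) ⊆
          (l.map fun f => ((C f : Set G) ∩ (Hb : Set G))).prod * (Db : Set G)) := by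
      intro l
      induction l with
      | nil =>
        have hP : (([] : List G).map fun f => ((C f : Set G) ∩ (Hb : Set G))).prod *
            (Db : Set G) = (Db : Set G) := by
          simp [one_mul]
        refine ⟨?_, ?_, ?_, ?_, ?_, ?_, ?_⟩
        · rw [hP]
        · rw [hP]; exact fun x hx => hDbHb hx
        · rw [hP]; exact fun a b ha hb => mul_mem ha hb
        · rw [hP]; exact fun a ha => inv_mem ha
        · rw [hP]; exact fun x hx a ha => hDbnorm x hx a ha
        · exact ⟨{1}, isCompact_singleton, by simp [one_mem], by rw [hP, Set.singleton_mul]; simp⟩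
        · intro f hf; exact absurd hf List.not_mem_nil
      | cons f l ihl =>
        obtain ⟨ih0, ih1, ih2, ih3, ih4, ⟨Kc, hKcomp, hKHb, hKeq⟩, ih5⟩ := ihl
        set Pl : Set G := (l.map fun f => ((C f : Set G) ∩ (Hb : Set G))).prod * (Db : Set G)
          with hPldef
        have hconsP : ((f :: l).map fun f => ((C f : Set G) ∩ (Hb : Set G))).prod *
            (Db : Set G) = ((C f : Set G) ∩ (Hb : Set G)) * Pl := by
          rw [List.map_cons, List.prod_cons, hPldef, mul_assoc]
        have h1Pl : (1 : G) ∈ Pl := ih0 (one_mem Db)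
        have hCfHb : ((C f : Set G) ∩ (Hb : Set G)) ⊆ (Hb : Set G) := Set.inter_subset_right
        have h1Cf : (1 : G) ∈ (C f : Set G) ∩ (Hb : Set G) := ⟨one_mem _, one_mem _⟩
        have hsubPl : Pl ⊆ ((C f : Set G) ∩ (Hb : Set G)) * Pl := fun p hp =>
          ⟨1, h1Cf, p, hp, one_mul p⟩
        -- conjugation stability of the new set
        have hconj : ∀ x ∈ Hb, ∀ a ∈ ((C f : Set G) ∩ (Hb : Set G)) * Pl,
            x * a * x⁻¹ ∈ ((C f : Set G) ∩ (Hb : Set G)) * Pl := by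
          rintro x hx a ⟨c, hc, p, hp, rfl⟩
          have hxc : x * c * x⁻¹ = ⁅x, c⁆ * c := by rw [commutatorElement_def]; group
          have hcomm : ⁅x, c⁆ ∈ Db :=
            hcommHb (Subgroup.commutator_mem_commutator hx (hCfHb hc))
          have hxp : x * p * x⁻¹ ∈ Pl := ih4 x hx p hp
          have hstep : x * (c * p) * x⁻¹ = (⁅x, c⁆ * c) * (x * p * x⁻¹) := by
            rw [commutatorElement_def]; group
          rw [hstep]
          -- ⁅x,c⁆ * c * q with q ∈ Pl : rewrite as c * (c⁻¹ * ⁅x,c⁆ * c * q)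
          have hcHb : c ∈ Hb := hCfHb hc
          have hdc : c⁻¹ * ⁅x, c⁆ * c ∈ Db := by
            have := hDbnorm c⁻¹ (inv_mem hcHb) ⁅x, c⁆ hcomm
            simpa using this
          have hq : c⁻¹ * ⁅x, c⁆ * c * (x * p * x⁻¹) ∈ Pl :=
            ih2 _ _ (ih0 hdc) hxp
          refine ⟨c, hc, c⁻¹ * ⁅x, c⁆ * c * (x * p * x⁻¹), hq, by group⟩
        refine ⟨?_, ?_, ?_, ?_, ?_, ?_, ?_⟩
        · rw [hconsP]
          exact fun d hd => hsubPl (ih0 hd)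
        · rw [hconsP]
          rintro a ⟨c, hc, p, hp, rfl⟩
          exact mul_mem (hCfHb hc) (ih1 hp)
        · rw [hconsP]
          rintro a b ⟨c, hc, p, hp, rfl⟩ ⟨c', hc', p', hp', rfl⟩
          -- (c p)(c' p') = (c c') ((c'⁻¹ p c') p')
          have hpc : c'⁻¹ * p * c' ∈ Pl := by
            have := ih4 c'⁻¹ (inv_mem (hCfHb hc')) p hp
            simpa using this
          refine ⟨c * c', ⟨mul_mem hc.1 hc'.1, mul_mem hc.2 hc'.2⟩,
            (c'⁻¹ * p * c') * p', ih2 _ _ hpc hp', by group⟩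
        · rw [hconsP]
          rintro a ⟨c, hc, p, hp, rfl⟩
          -- (c p)⁻¹ = c⁻¹ (c p⁻¹ c⁻¹)
          have hpinv : c * p⁻¹ * c⁻¹ ∈ Pl := ih4 c (hCfHb hc) p⁻¹ (ih3 p hp)
          refine ⟨c⁻¹, ⟨inv_mem hc.1, inv_mem hc.2⟩, c * p⁻¹ * c⁻¹, hpinv, by group⟩
        · rw [hconsP]; exact hconj
        · refine ⟨((C f : Set G) ∩ (Hb : Set G)) * Kc,
            (hCcomp f |>.inter_right hHbclosed).mul hKcomp, ?_, ?_⟩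
          · rintro x ⟨c, hc, k, hk, rfl⟩
            exact mul_mem (hCfHb hc) (hKHb hk)
          · rw [hconsP, hKeq, mul_assoc]
        · intro g hg
          rcases List.mem_cons.1 hg with rfl | hgl
          · rw [hconsP]
            exact fun c hc => ⟨c, hc, 1, h1Pl, mul_one c⟩
          · rw [hconsP]
            exact fun c hc => hsubPl (ih5 g hgl hc)
    obtain ⟨m0, m1, m2, m3, _, ⟨Kc, hKcomp, hKHb, hKeq⟩, m5⟩ := main F.toList
    set R : Set G := (F.toList.map fun f => ((C f : Set G) ∩ (Hb : Set G))).prod * (Db : Set G)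
      with hRdef
    -- R is a closed subgroup containing H, hence contains Hb
    have hRclosed : IsClosed R := by
      rw [hKeq]
      exact hDbclosed.mul_left_of_isCompact hKcomp
    set Rsub : Subgroup G :=
      { carrier := R
        one_mem' := m0 (one_mem Db)
        mul_mem' := fun ha hb => m2 _ _ ha hb
        inv_mem' := fun ha => m3 _ ha } with hRsubdef
    have hHR : H ≤ Rsub := by
      rw [hHdef, Subgroup.closure_le]
      intro f hf
      have hfH : f ∈ Hb := Subgroup.le_topologicalClosure H (Subgroup.subset_closure hf)
      exact m5 f (Finset.mem_toList.2 hf) ⟨hCmem f, hfH⟩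
    have hHbR : (Hb : Set G) ⊆ R :=
      Subgroup.topologicalClosure_minimal H hHR hRclosed
    have hHbeq : (Hb : Set G) = Kc * (Db : Set G) := by
      apply Set.Subset.antisymm
      · rw [← hKeq]; exact hHbR
      · rw [← hKeq]; exact m1
    -- it suffices to show Db is compact
    suffices hDbcomp : IsCompact (Db : Set G) by
      have : IsCompact ((Hb : Set G)) := by
        rw [hHbeq]; exact hKcomp.mul hDbcomp
      exact this
    -- generating set for Hb
    set Sig : Set G := (F : Set G) ∪ ((F : Set G))⁻¹ ∪ (V ∩ (Hb : Set G)) with hSigdef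
    have hSigHb : Sig ⊆ (Hb : Set G) := by
      intro x hx
      rcases hx with (hx | hx) | hx
      · exact Subgroup.le_topologicalClosure H (Subgroup.subset_closure hx)
      · have hx' : x⁻¹ ∈ Hb :=
          Subgroup.le_topologicalClosure H (Subgroup.subset_closure hx)
        simpa using inv_mem hx'
      · exact hx.2
    have hVmem : ∀ x : G, x⁻¹ ∈ V ↔ x ∈ V := by
      intro x
      conv_rhs => rw [← hVsym]
      exact (Set.mem_inv).symm
    have hSigsym : Sig⁻¹ = Sig := by
      ext x
      rw [Set.mem_inv]
      simp only [hSigdef, Set.mem_union, Set.mem_inter_iff, Set.mem_inv, inv_inv,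
        SetLike.mem_coe]
      constructor
      · rintro ((h | h) | ⟨h1, h2⟩)
        · exact Or.inl (Or.inr h)
        · exact Or.inl (Or.inl h)
        · exact Or.inr ⟨(hVmem x).1 h1, by simpa using Hb.inv_mem h2⟩
      · rintro ((h | h) | ⟨h1, h2⟩)
        · exact Or.inl (Or.inr h)
        · exact Or.inl (Or.inl h)
        · exact Or.inr ⟨(hVmem x).2 h1, Hb.inv_mem h2⟩
    have hHbSig : ∀ x ∈ Hb, x ∈ Subgroup.closure Sig := by
      have hle : Subgroup.closure Sig ≤ Hb := (Subgroup.closure_le Hb).2 hSigHb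
      have hclosed : IsClosed ((Subgroup.closure Sig : Subgroup G) : Set G) := by
        apply closed_of hVn Hb hHbclosed _ hle
        intro x hx
        exact Subgroup.subset_closure (Or.inr hx)
      have hH : H ≤ Subgroup.closure Sig := by
        rw [hHdef, Subgroup.closure_le]
        intro f hf
        exact Subgroup.subset_closure (Or.inl (Or.inl hf))
      exact fun x hx => Subgroup.topologicalClosure_minimal H hH hclosed hx
    -- telescoping: Db is generated by a compact set
    set K'' : Set G := Kc ∪ Kc⁻¹ ∪ {1} with hK''def
    have hK''comp : IsCompact K'' := (hKcomp.union hKcomp.inv).union isCompact_singleton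
    have hK''Hb : K'' ⊆ (Hb : Set G) := by
      intro x hx
      rcases hx with (hx | hx) | hx
      · exact hHbeq ▸ ⟨x, hx, 1, one_mem Db, mul_one x⟩
      · have hx' : x⁻¹ ∈ Kc := hx
        have : x⁻¹ ∈ (Hb : Set G) := hHbeq ▸ ⟨x⁻¹, hx', 1, one_mem Db, mul_one _⟩
        simpa using Hb.inv_mem this
      · rw [hx]; exact one_mem Hb
    have h1K'' : (1 : G) ∈ K'' := Or.inr rfl
    set Sg : Set G := (K'' * (Sig ∪ {1}) * K'') ∩ (Db : Set G) with hSgdef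
    have hSgcomp : IsCompact Sg := by
      have hSigcomp : IsCompact (Sig ∪ {1}) := by
        have h1 : IsCompact ((F : Set G)) := F.finite_toSet.isCompact
        have h2 : IsCompact (((F : Set G))⁻¹) := h1.inv
        have h3 : IsCompact (V ∩ (Hb : Set G)) := hV.inter_right hHbclosed
        exact (((h1.union h2).union h3).union isCompact_singleton)
      exact (((hK''comp.mul hSigcomp).mul hK''comp)).inter_right hDbclosed
    have hSgD : Sg ⊆ (Db : Set G) := Set.inter_subset_right
    -- the telescoping lemma
    have htel : ∀ l : List G, (∀ s ∈ l, s ∈ Sig) → ∀ a ∈ K'', a * l.prod ∈ Db →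
        a * l.prod ∈ Subgroup.closure Sg := by
      intro l
      induction l with
      | nil =>
        intro _ a ha haD
        apply Subgroup.subset_closure
        rw [hSgdef]
        refine ⟨⟨a, ⟨a, ha, 1, Or.inr rfl, mul_one a⟩, 1, h1K'', by simp⟩, by simpa using haD⟩
      | cons s l ihl =>
        intro hls a ha haD
        have hsSig : s ∈ Sig := hls s List.mem_cons_self
        have hasHb : ((a * s)⁻¹ : G) ∈ (Hb : Set G) := by
          have haHb : a ∈ Hb := hK''Hb ha
          have hsHb : s ∈ Hb := hSigHb hsSig
          simpa using inv_mem (mul_mem haHb hsHb)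
        rw [hHbeq] at hasHb
        obtain ⟨k, hk, d, hd, hkd⟩ := hasHb
        have hask : a * s * k ∈ Db := by
          have : a * s = d⁻¹ * k⁻¹ := by
            have : (a * s)⁻¹ = k * d := hkd.symm
            calc a * s = ((a*s)⁻¹)⁻¹ := by group
            _ = (k * d)⁻¹ := by rw [this]
            _ = d⁻¹ * k⁻¹ := by group
          rw [this]
          have : d⁻¹ * k⁻¹ * k = d⁻¹ := by group
          rw [this]
          exact inv_mem hd
        have hfSg : a * s * k ∈ Sg := by
          rw [hSgdef]
          refine ⟨⟨a * s, ⟨a, ha, s, Or.inl hsSig, rfl⟩, k, Or.inl (Or.inl hk), rfl⟩, hask⟩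
        have hkK'' : k⁻¹ ∈ K'' := Or.inl (Or.inr (by simpa using hk))
        have hrest : k⁻¹ * l.prod ∈ Db := by
          have heq : k⁻¹ * l.prod = (a * s * k)⁻¹ * (a * (s :: l).prod) := by
            rw [List.prod_cons]; group
          rw [heq]
          exact mul_mem (inv_mem hask) haD
        have hih : k⁻¹ * l.prod ∈ Subgroup.closure Sg :=
          ihl (fun x hx => hls x (List.mem_cons_of_mem s hx)) k⁻¹ hkK'' hrest
        have heq2 : a * (s :: l).prod = (a * s * k) * (k⁻¹ * l.prod) := by
          rw [List.prod_cons]; group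
        rw [heq2]
        exact mul_mem (Subgroup.subset_closure hfSg) hih
    have hDgen : ∀ d ∈ Db, d ∈ Subgroup.closure Sg := by
      intro d hd
      have hdHb : d ∈ Hb := hDbHb hd
      have hdSig : d ∈ Subgroup.closure Sig := hHbSig d hdHb
      have hd' : d ∈ Submonoid.closure (Sig ∪ Sig⁻¹) := by
        rw [← Subgroup.closure_toSubmonoid]
        exact hdSig
      rw [hSigsym, Set.union_self] at hd'
      obtain ⟨l, hl, hlp⟩ := Submonoid.exists_list_of_mem_closure hd'
      have := htel l hl 1 h1K'' (by rw [one_mul, hlp]; exact hd)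
      rwa [one_mul, hlp] at this
    -- apply the compactly generated criterion
    apply compact_of_cg hcc hsolv hV hVn hVsym hVinv Db hDbclosed Sg hSgcomp hSgD
    · intro d hd
      exact Subgroup.closure_mono Set.subset_union_left (hDgen d hd)
    · intro F' hF'D
      apply ih
      have hle : Subgroup.closure ((F' : Finset G) : Set G) ≤ Db :=
        (Subgroup.closure_le Db).2 hF'D
      have h1 : Stmt18.dser (Subgroup.closure ((F' : Finset G) : Set G)) n ≤
          Stmt18.dser Db n := Stmt18.dser_mono hle n
      have h2 : Stmt18.dser Db n ≤ (Stmt18.dser (⁅H, H⁆ : Subgroup G) n).topologicalClosure :=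
        dser_topClosure_le _ n
      have h3 : Stmt18.dser (⁅H, H⁆ : Subgroup G) n = ⊥ := by
        have := Stmt18.dser_shift H n
        rw [← this, hF]
      rw [h3, topClosure_bot] at h2
      exact le_bot_iff.1 (h1.trans h2)

end Pind

end CGsec

/-- In a compactly covered, locally compact, locally solvable, balanced
topological group every compact subset is contained in a compact open subgroup. -/
theorem compact_subset_subset_compact_open_subgroup {G : Type u} [Group G]
    [TopologicalSpace G] [IsTopologicalGroup G] [T2Space G] [LocallyCompactSpace G]
    (hcc : CompactlyCovered G) (hsolv : LocallySolvable G) (hbal : IsBalancedGroup G) :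
    ∀ K : Set G, IsCompact K →
      ∃ H : Subgroup G, IsCompact (H : Set G) ∧ IsOpen (H : Set G) ∧ K ⊆ H := by
  intro K hK
  obtain ⟨V, hV, hVn, hVsym, hVimg⟩ := Stmt18T.exists_good_V hbal
  have hVinv : ∀ g x : G, x ∈ V → g * x * g⁻¹ ∈ V := by
    intro g x hx
    rw [← hVimg g]
    exact ⟨x, hx, rfl⟩
  set H₁ : Subgroup G := Subgroup.closure (K ∪ V) with hH₁def
  have hVH₁ : V ⊆ (H₁ : Set G) := fun v hv => Subgroup.subset_closure (Or.inr hv)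
  have hopen : IsOpen (H₁ : Set G) :=
    Subgroup.isOpen_of_mem_nhds H₁ (Filter.mem_of_superset hVn hVH₁)
  have hclosed : IsClosed (H₁ : Set G) := H₁.isClosed_of_isOpen hopen
  have hKH : K ⊆ (H₁ : Set G) := fun k hk => Subgroup.subset_closure (Or.inl hk)
  have hcomp : IsCompact (H₁ : Set G) := by
    apply CGsec.compact_of_cg hcc hsolv hV hVn hVsym hVinv H₁ hclosed (K ∪ V)
      (hK.union hV) (Set.union_subset hKH hVH₁)
    · intro d hd
      exact Subgroup.closure_mono Set.subset_union_left hd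
    · intro F hFH
      obtain ⟨n, hn⟩ := (Stmt18.isSolvable_iff_dser (Subgroup.closure (F : Set G))).1 (hsolv F)
      exact CGsec.compact_closure_of_fg hcc hsolv hV hVn hVsym hVinv n F hn
  exact ⟨H₁, hcomp, hopen, hKH⟩
end
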